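/- arXiv:2007.11060 — 4 statements merged into one kernel-verified Lean document; each statement's English description precedes it below -/
import Mathlib

section
/- For all integers 1 ≤ ℓ ≤ j ≤ n, the identity (−1)^ℓ · L*(ℓ,j) = Σ_{k=ℓ+1}^{j} (−1)^{k−1} · L(ℓ,k−1) · L*(k,j) + (−1)^j · L(ℓ,j) holds in R. -/
open scoped BigOperators

/-- `Lser f ℓ j = L(ℓ,j) = Σ_{i_ℓ > i_{ℓ+1} > ⋯ > i_j ≥ 0} f_ℓ(i_ℓ)⋯f_j(i_j)`,
the sum over strictly decreasing tuples of nonnegative integers.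
By convention `Lser f ℓ (ℓ-1) = 1` (empty tuple). -/
noncomputable def Lser {R : Type*} [NormedCommRing R] (f : ℕ → ℕ → R) (ℓ j : ℕ) : R :=
  ∑' g : {g : Fin (j + 1 - ℓ) → ℕ // StrictAnti g},
    ∏ m : Fin (j + 1 - ℓ), f (ℓ + (m : ℕ)) (g.1 m)

/-- `Lstar f ℓ j = L*(ℓ,j) = Σ_{0 ≤ i_ℓ ≤ i_{ℓ+1} ≤ ⋯ ≤ i_j} f_ℓ(i_ℓ)⋯f_j(i_j)`,
the sum over weakly increasing tuples of nonnegative integers.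
By convention `Lstar f ℓ (ℓ-1) = 1` (empty tuple). -/
noncomputable def Lstar {R : Type*} [NormedCommRing R] (f : ℕ → ℕ → R) (ℓ j : ℕ) : R :=
  ∑' g : {g : Fin (j + 1 - ℓ) → ℕ // Monotone g},
    ∏ m : Fin (j + 1 - ℓ), f (ℓ + (m : ℕ)) (g.1 m)


open Filter Set

set_option linter.unusedSectionVars false
set_option linter.unusedVariables false
set_option maxHeartbeats 1000000

section Aux
variable {R : Type*} [NormedCommRing R] [IsUltrametricDist R] [CompleteSpace R]

lemma aux_summable {α : Type*} {F : α → R} (h : Tendsto F cofinite (nhds 0)) :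
    Summable F := by
  rw [summable_iff_vanishing]
  intro e he
  obtain ⟨ε, hε, hball⟩ := Metric.mem_nhds_iff.mp he
  have hfin : {x | ¬ ‖F x‖ < ε / 2}.Finite := by
    have h2 : ∀ᶠ x in cofinite, ‖F x‖ < ε / 2 := by
      have := h.eventually (Metric.ball_mem_nhds (0 : R) (show (0:ℝ) < ε/2 by positivity))
      filter_upwards [this] with x hx
      simpa [mem_ball_zero_iff] using hx
    exact Filter.eventually_cofinite.mp h2
  refine ⟨hfin.toFinset, fun t ht => ?_⟩
  apply hball
  rw [Metric.mem_ball, dist_zero_right]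
  have hle : ‖∑ i ∈ t, F i‖ ≤ ε / 2 := by
    apply IsUltrametricDist.norm_sum_le_of_forall_le_of_nonneg (by positivity)
    intro i hi
    have : i ∉ hfin.toFinset := Finset.disjoint_left.mp ht hi
    simp only [Set.Finite.mem_toFinset, Set.mem_setOf_eq, not_not] at this
    exact this.le
  linarith

lemma aux_prod_tendsto (c : ℕ) (u : Fin c → ℕ → R)
    (hu : ∀ m, Tendsto (fun i => ‖u m i‖) atTop (nhds 0)) :
    Tendsto (fun g : Fin c → ℕ => ∏ m, u m (g m)) cofinite (nhds 0) := by
  rw [NormedAddCommGroup.tendsto_nhds_zero]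
  intro ε hε
  rw [Filter.eventually_cofinite]
  -- bounds
  have hbd : ∀ m : Fin c, ∃ C : ℝ, ∀ i, ‖u m i‖ ≤ C := by
    intro m
    have := (hu m).bddAbove_range
    obtain ⟨C, hC⟩ := this
    exact ⟨C, fun i => hC ⟨i, rfl⟩⟩
  choose C hC using hbd
  set B : ℝ := 1 + ∑ m : Fin c, max (C m) 0 with hB
  have hB1 : 1 ≤ B := by
    have : (0:ℝ) ≤ ∑ m : Fin c, max (C m) 0 :=
      Finset.sum_nonneg (fun m _ => le_max_right _ _)
    simp [hB]; linarith
  have hBm : ∀ m, ∀ i, ‖u m i‖ ≤ B := by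
    intro m i
    refine (hC m i).trans ?_
    calc C m ≤ max (C m) 0 := le_max_left _ _
    _ ≤ ∑ m' : Fin c, max (C m') 0 :=
        Finset.single_le_sum (f := fun m' => max (C m') 0) (fun m' _ => le_max_right _ _) (Finset.mem_univ m)
    _ ≤ B := by simp [hB]
  have hBpos : (0:ℝ) < B := by linarith
  set δ : ℝ := ε / B ^ c with hδ
  have hδpos : 0 < δ := by positivity
  have hM : ∀ m : Fin c, ∃ M : ℕ, ∀ i, M ≤ i → ‖u m i‖ < δ := by
    intro m
    have := (hu m).eventually (eventually_lt_nhds hδpos)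
    rw [Filter.eventually_atTop] at this
    obtain ⟨M, hM⟩ := this
    exact ⟨M, fun i hi => hM i hi⟩
  choose M hMlt using hM
  have hsub : {g : Fin c → ℕ | ¬ ‖∏ m, u m (g m)‖ < ε} ⊆
      Set.pi Set.univ (fun m => Set.Iio (M m)) := by
    intro g hg
    rw [Set.mem_setOf_eq] at hg
    by_contra hgpi
    apply hg
    rw [Set.mem_univ_pi] at hgpi
    push_neg at hgpi
    obtain ⟨m₀, hm₀⟩ := hgpi
    rw [Set.mem_Iio, not_lt] at hm₀
    have h1 : ‖∏ m, u m (g m)‖ ≤ ∏ m, ‖u m (g m)‖ :=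
      Finset.norm_prod_le' Finset.univ ⟨m₀, Finset.mem_univ m₀⟩ _
    have h2 : ∏ m, ‖u m (g m)‖ =
        ‖u m₀ (g m₀)‖ * ∏ m ∈ Finset.univ.erase m₀, ‖u m (g m)‖ :=
      (Finset.mul_prod_erase Finset.univ _ (Finset.mem_univ m₀)).symm
    have h3 : ∏ m ∈ Finset.univ.erase m₀, ‖u m (g m)‖ ≤ B ^ (Finset.univ.erase m₀).card := by
      rw [← Finset.prod_const]
      exact Finset.prod_le_prod (fun m _ => norm_nonneg _) (fun m _ => hBm m _)
    have h4 : ‖u m₀ (g m₀)‖ < δ := hMlt m₀ _ hm₀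
    have h5 : (0:ℝ) < B ^ (Finset.univ.erase m₀).card := by positivity
    have h6 : B ^ (Finset.univ.erase m₀).card ≤ B ^ c := by
      apply pow_le_pow_right₀ hB1
      calc (Finset.univ.erase m₀).card ≤ Finset.univ.card := Finset.card_erase_le
      _ = c := by simp
    calc ‖∏ m, u m (g m)‖ ≤ ‖u m₀ (g m₀)‖ * ∏ m ∈ Finset.univ.erase m₀, ‖u m (g m)‖ := by
          rw [← h2]; exact h1
    _ ≤ ‖u m₀ (g m₀)‖ * B ^ (Finset.univ.erase m₀).card := by
          apply mul_le_mul_of_nonneg_left h3 (norm_nonneg _)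
    _ < δ * B ^ (Finset.univ.erase m₀).card := by
          exact mul_lt_mul_of_pos_right h4 h5
    _ ≤ δ * B ^ c := by apply mul_le_mul_of_nonneg_left h6 hδpos.le
    _ = ε := by rw [hδ]; field_simp
  exact Set.Finite.subset (Set.Finite.pi (fun m => Set.finite_Iio _)) hsub

end Aux


section Aux2
variable {R : Type*} [NormedCommRing R]

lemma aux_pair_tendsto {α β : Type*} {u : α → R} {v : β → R}
    (hu : Tendsto u cofinite (nhds 0)) (hv : Tendsto v cofinite (nhds 0)) :
    Tendsto (fun z : α × β => ‖u z.1‖ * ‖v z.2‖) cofinite (nhds 0) := by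
  have hun : Tendsto (fun x => ‖u x‖) cofinite (nhds 0) := by simpa using hu.norm
  have hvn : Tendsto (fun y => ‖v y‖) cofinite (nhds 0) := by simpa using hv.norm
  obtain ⟨Cu, hCu⟩ := hun.bddAbove_range_of_cofinite
  obtain ⟨Cv, hCv⟩ := hvn.bddAbove_range_of_cofinite
  have hCu' : ∀ x, ‖u x‖ ≤ max Cu 1 := fun x =>
    le_trans (hCu ⟨x, rfl⟩) (le_max_left _ _)
  have hCv' : ∀ y, ‖v y‖ ≤ max Cv 1 := fun y =>
    le_trans (hCv ⟨y, rfl⟩) (le_max_left _ _)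
  have hCup : (0:ℝ) < max Cu 1 := lt_of_lt_of_le one_pos (le_max_right _ _)
  have hCvp : (0:ℝ) < max Cv 1 := lt_of_lt_of_le one_pos (le_max_right _ _)
  rw [Metric.tendsto_nhds]
  intro ε hε
  rw [Filter.eventually_cofinite]
  have hsub : {z : α × β | ¬ dist (‖u z.1‖ * ‖v z.2‖) 0 < ε} ⊆
      {x | ¬ ‖u x‖ < ε / max Cv 1} ×ˢ {y | ¬ ‖v y‖ < ε / max Cu 1} := by
    rintro ⟨x, y⟩ hz
    simp only [Set.mem_setOf_eq, Real.dist_eq, sub_zero] at hz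
    have habs : |‖u x‖ * ‖v y‖| = ‖u x‖ * ‖v y‖ :=
      abs_of_nonneg (mul_nonneg (norm_nonneg _) (norm_nonneg _))
    rw [habs] at hz
    constructor
    · simp only [Set.mem_setOf_eq]
      intro hx
      apply hz
      calc ‖u x‖ * ‖v y‖ ≤ ‖u x‖ * max Cv 1 :=
            mul_le_mul_of_nonneg_left (hCv' y) (norm_nonneg _)
      _ < (ε / max Cv 1) * max Cv 1 := by
            exact mul_lt_mul_of_pos_right hx hCvp
      _ = ε := by field_simp
    · simp only [Set.mem_setOf_eq]
      intro hy
      apply hz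
      calc ‖u x‖ * ‖v y‖ ≤ max Cu 1 * ‖v y‖ :=
            mul_le_mul_of_nonneg_right (hCu' x) (norm_nonneg _)
      _ < max Cu 1 * (ε / max Cu 1) := by
            exact mul_lt_mul_of_pos_left hy hCup
      _ = ε := by field_simp
  refine Set.Finite.subset (Set.Finite.prod ?_ ?_) hsub
  · have : ∀ᶠ x in cofinite, ‖u x‖ < ε / max Cv 1 := by
      have := hun.eventually (eventually_lt_nhds (show (0:ℝ) < ε / max Cv 1 by positivity))
      simpa using this
    exact Filter.eventually_cofinite.mp this
  · have : ∀ᶠ y in cofinite, ‖v y‖ < ε / max Cu 1 := by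
      have := hvn.eventually (eventually_lt_nhds (show (0:ℝ) < ε / max Cu 1 by positivity))
      simpa using this
    exact Filter.eventually_cofinite.mp this

end Aux2

/-- Split equivalence for tuples. -/
def splitE (a b N : ℕ) (hab : a + b = N) : (Fin N → ℕ) ≃ (Fin a → ℕ) × (Fin b → ℕ) where
  toFun i := (fun m => i ⟨m, by have := m.isLt; omega⟩,
              fun m => i ⟨a + m, by have := m.isLt; omega⟩)
  invFun p m := if hm : (m : ℕ) < a then p.1 ⟨m, hm⟩
                else p.2 ⟨(m : ℕ) - a, by have := m.isLt; omega⟩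
  left_inv i := by
    funext m
    dsimp only
    split
    · congr 1
    · congr 1
      apply Fin.ext
      simp only []
      omega
  right_inv p := by
    ext m
    · dsimp only
      rw [dif_pos m.isLt]
    · dsimp only
      rw [dif_neg (by omega)]
      exact congrArg p.2 (by apply Fin.ext; simp only []; omega)

@[simp] lemma splitE_fst (a b N : ℕ) (hab : a + b = N) (i : Fin N → ℕ) (m : Fin a) :
    (splitE a b N hab i).1 m = i ⟨m, by have := m.isLt; omega⟩ := rfl

@[simp] lemma splitE_snd (a b N : ℕ) (hab : a + b = N) (i : Fin N → ℕ) (m : Fin b) :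
    (splitE a b N hab i).2 m = i ⟨a + m, by have := m.isLt; omega⟩ := rfl

/-- `Cnd N p i` : `i` is strictly decreasing on positions `< p` and
weakly increasing on positions `≥ p`. -/
def Cnd (N p : ℕ) (i : Fin N → ℕ) : Prop :=
  (∀ x y : Fin N, (x:ℕ) < (y:ℕ) → (y:ℕ) < p → i y < i x) ∧
  (∀ x y : Fin N, p ≤ (x:ℕ) → (x:ℕ) ≤ (y:ℕ) → i x ≤ i y)

instance (N p : ℕ) (i : Fin N → ℕ) : Decidable (Cnd N p i) := by
  unfold Cnd; infer_instance

lemma cnd_zero (N : ℕ) (i : Fin N → ℕ) : Cnd N 0 i ↔ Monotone i := by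
  constructor
  · intro h x y hxy
    exact h.2 x y (Nat.zero_le _) hxy
  · intro h
    exact ⟨fun x y hxy hy => absurd hy (by omega), fun x y _ hxy => h hxy⟩

lemma cnd_top (N : ℕ) (i : Fin N → ℕ) : Cnd N N i ↔ StrictAnti i := by
  constructor
  · intro h x y hxy
    exact h.1 x y hxy y.isLt
  · intro h
    refine ⟨fun x y hxy _ => h hxy, fun x y hx _ => absurd hx (by have := x.isLt; omega)⟩

lemma cnd_adj (N p q : ℕ) (i : Fin N → ℕ) (hC : Cnd N p i) (hD : Cnd N q i)
    (hpq : p < q) (hq : q ≤ N) : q = p + 1 := by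
  by_contra hne
  have hx : p < N := by omega
  have hx1 : p + 1 < N := by omega
  have h1 : i ⟨p+1, hx1⟩ < i ⟨p, hx⟩ := hD.1 ⟨p, hx⟩ ⟨p+1, hx1⟩ (by simp) (by simp; omega)
  have h2 : i ⟨p, hx⟩ ≤ i ⟨p+1, hx1⟩ := hC.2 ⟨p, hx⟩ ⟨p+1, hx1⟩ (by simp) (by simp)
  omega

lemma cnd_nbr (N p : ℕ) (hN : 1 ≤ N) (i : Fin N → ℕ) (hp : p ≤ N) (hC : Cnd N p i) :
    (p + 1 ≤ N ∧ Cnd N (p+1) i) ∨ (1 ≤ p ∧ Cnd N (p-1) i) := by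
  rcases Nat.eq_or_lt_of_le hp with rfl|hpN
  · right
    refine ⟨hN, fun x y hxy hy => hC.1 x y hxy (by omega), fun x y hx hxy => ?_⟩
    have hxe : x = y := Fin.ext (by have := x.isLt; have := y.isLt; omega)
    rw [hxe]
  · by_cases hp0 : p = 0
    · left
      subst hp0
      refine ⟨by omega, fun x y hxy hy => absurd hxy (by omega),
        fun x y hx hxy => hC.2 x y (by omega) hxy⟩
    · have hp1 : 1 ≤ p := by omega
      have hxp : p - 1 < N := by omega
      set xp : Fin N := ⟨p-1, hxp⟩ with hxpd
      set yp : Fin N := ⟨p, hpN⟩ with hypd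
      by_cases hcmp : i xp ≤ i yp
      · right
        refine ⟨hp1, fun x y hxy hy => hC.1 x y hxy (by omega), fun x y hx hxy => ?_⟩
        by_cases hxq : p ≤ (x:ℕ)
        · exact hC.2 x y hxq hxy
        · have hxe : x = xp := Fin.ext (by simp [hxpd]; omega)
          by_cases hyq : p ≤ (y:ℕ)
          · have hy1 : i yp ≤ i y := hC.2 yp y (by simp [hypd]) (by simp [hypd]; omega)
            rw [hxe]; omega
          · have hye : y = xp := Fin.ext (by simp [hxpd]; omega)
            rw [hxe, hye]
      · left
        refine ⟨by omega, fun x y hxy hy => ?_, fun x y hx hxy => hC.2 x y (by omega) hxy⟩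
        by_cases hyq : (y:ℕ) < p
        · exact hC.1 x y hxy hyq
        · have hye : y = yp := Fin.ext (by simp [hypd]; omega)
          by_cases hxq : (x:ℕ) < p - 1
          · have h1 : i xp < i x := hC.1 x xp (by simp [hxpd]; omega) (by simp [hxpd]; omega)
            rw [hye]; omega
          · have hxe : x = xp := Fin.ext (by simp [hxpd]; omega)
            rw [hxe, hye]; omega

/-- The key sign-cancellation identity. -/
lemma core_cancel {R : Type*} [CommRing R] (N : ℕ) (hN : 1 ≤ N) (C : ℕ → Prop) [DecidablePred C]
    (hadj : ∀ p q, C p → C q → p < q → q ≤ N → q = p + 1)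
    (hnbr : ∀ p, p ≤ N → C p → (p + 1 ≤ N ∧ C (p+1)) ∨ (1 ≤ p ∧ C (p-1))) :
    ∑ p ∈ Finset.range (N+1), (-1 : R)^p * (if C p then 1 else 0) = 0 := by
  classical
  have hf1 : ∀ p, C p → (-1 : R)^p * (if C p then 1 else 0) = (-1)^p := by
    intro p h; simp [h]
  have hf0 : ∀ p, ¬ C p → (-1 : R)^p * (if C p then 1 else 0) = 0 := by
    intro p h; simp [h]
  apply Finset.sum_involution
    (g := fun p _ => if C p ∧ C (p+1) ∧ p + 1 ≤ N then p + 1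
      else if C p ∧ 1 ≤ p ∧ C (p-1) then p - 1 else p)
  · -- f a + f (g a) = 0
    intro p hp
    have hpN : p ≤ N := Nat.lt_succ_iff.mp (Finset.mem_range.mp hp)
    by_cases hCp : C p
    · by_cases hA : C (p+1) ∧ p + 1 ≤ N
      · have hgp : (if C p ∧ C (p+1) ∧ p + 1 ≤ N then p + 1
            else if C p ∧ 1 ≤ p ∧ C (p-1) then p - 1 else p) = p + 1 :=
          if_pos ⟨hCp, hA.1, hA.2⟩
        rw [hgp, hf1 p hCp, hf1 _ hA.1, pow_succ]
        ring
      · have hB : 1 ≤ p ∧ C (p-1) := by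
          rcases hnbr p hpN hCp with ⟨h1, h2⟩ | h
          · exact absurd ⟨h2, h1⟩ hA
          · exact h
        have hgp : (if C p ∧ C (p+1) ∧ p + 1 ≤ N then p + 1
            else if C p ∧ 1 ≤ p ∧ C (p-1) then p - 1 else p) = p - 1 := by
          rw [if_neg (fun h => hA ⟨h.2.1, h.2.2⟩), if_pos ⟨hCp, hB.1, hB.2⟩]
        rw [hgp, hf1 p hCp, hf1 _ hB.2]
        obtain ⟨q, rfl⟩ : ∃ q, p = q + 1 := ⟨p - 1, by omega⟩
        simp only [Nat.add_sub_cancel]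
        rw [pow_succ]
        ring
    · have hgp : (if C p ∧ C (p+1) ∧ p + 1 ≤ N then p + 1
          else if C p ∧ 1 ≤ p ∧ C (p-1) then p - 1 else p) = p := by
        rw [if_neg (fun h => hCp h.1), if_neg (fun h => hCp h.1)]
      rw [hgp, hf0 p hCp]
      ring
  · -- g a ≠ a when f a ≠ 0
    intro p hp hfp
    have hpN : p ≤ N := Nat.lt_succ_iff.mp (Finset.mem_range.mp hp)
    have hCp : C p := by
      by_contra hCp
      exact hfp (hf0 p hCp)
    by_cases hA : C (p+1) ∧ p + 1 ≤ N
    · rw [if_pos ⟨hCp, hA.1, hA.2⟩]; omega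
    · have hB : 1 ≤ p ∧ C (p-1) := by
        rcases hnbr p hpN hCp with ⟨h1, h2⟩ | h
        · exact absurd ⟨h2, h1⟩ hA
        · exact h
      rw [if_neg (fun h => hA ⟨h.2.1, h.2.2⟩), if_pos ⟨hCp, hB.1, hB.2⟩]
      omega
  · -- g a ∈ s
    intro p hp
    have hpN : p ≤ N := Nat.lt_succ_iff.mp (Finset.mem_range.mp hp)
    simp only [Finset.mem_range]
    split
    · omega
    · split <;> omega
  · -- g (g a) = a
    intro p hp
    have hpN : p ≤ N := Nat.lt_succ_iff.mp (Finset.mem_range.mp hp)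
    by_cases hCp : C p
    · by_cases hA : C (p+1) ∧ p + 1 ≤ N
      · have hgp : (if C p ∧ C (p+1) ∧ p + 1 ≤ N then p + 1
            else if C p ∧ 1 ≤ p ∧ C (p-1) then p - 1 else p) = p + 1 :=
          if_pos ⟨hCp, hA.1, hA.2⟩
        rw [hgp]
        have hnot : ¬ (C (p+1) ∧ C (p+1+1) ∧ p + 1 + 1 ≤ N) := by
          rintro ⟨h1, h2, h3⟩
          have := hadj p (p+1+1) hCp h2 (by omega) (by omega)
          omega
        rw [if_neg hnot, if_pos ⟨hA.1, by omega, by simpa using hCp⟩]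
        omega
      · by_cases hB : 1 ≤ p ∧ C (p-1)
        · have hgp : (if C p ∧ C (p+1) ∧ p + 1 ≤ N then p + 1
              else if C p ∧ 1 ≤ p ∧ C (p-1) then p - 1 else p) = p - 1 := by
            rw [if_neg (fun h => hA ⟨h.2.1, h.2.2⟩), if_pos ⟨hCp, hB.1, hB.2⟩]
          rw [hgp]
          rw [if_pos ⟨hB.2, by rwa [Nat.sub_add_cancel hB.1], by omega⟩]
          omega
        · have hgp : (if C p ∧ C (p+1) ∧ p + 1 ≤ N then p + 1
              else if C p ∧ 1 ≤ p ∧ C (p-1) then p - 1 else p) = p := by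
            rw [if_neg (fun h => hA ⟨h.2.1, h.2.2⟩), if_neg (fun h => hB ⟨h.2.1, h.2.2⟩)]
          rw [hgp, hgp]
    · have hgp : (if C p ∧ C (p+1) ∧ p + 1 ≤ N then p + 1
          else if C p ∧ 1 ≤ p ∧ C (p-1) then p - 1 else p) = p := by
        rw [if_neg (fun h => hCp h.1), if_neg (fun h => hCp h.1)]
      rw [hgp, hgp]

section Bridge
variable {R : Type*} [NormedCommRing R]

lemma bridgeA (a b N : ℕ) (hab : a + b = N) (i : Fin N → ℕ) :
    StrictAnti ((splitE a b N hab) i).1 ↔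
      (∀ x y : Fin N, (x:ℕ) < (y:ℕ) → (y:ℕ) < a → i y < i x) := by
  constructor
  · intro h x y hxy hy
    have hx : (x:ℕ) < a := by omega
    have := h (a := ⟨x, hx⟩) (b := ⟨y, hy⟩) (Fin.mk_lt_mk.mpr hxy)
    exact this
  · intro h m m' hmm'
    simp only [splitE_fst]
    exact h ⟨m, by have := m.isLt; omega⟩ ⟨m', by have := m'.isLt; omega⟩
      (Fin.lt_def.mp hmm') m'.isLt

lemma bridgeB (a b N : ℕ) (hab : a + b = N) (i : Fin N → ℕ) :
    Monotone ((splitE a b N hab) i).2 ↔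
      (∀ x y : Fin N, a ≤ (x:ℕ) → (x:ℕ) ≤ (y:ℕ) → i x ≤ i y) := by
  constructor
  · intro h x y hax hxy
    have hx : (x:ℕ) - a < b := by have := x.isLt; omega
    have hy : (y:ℕ) - a < b := by have := y.isLt; omega
    have := h (a := ⟨(x:ℕ) - a, hx⟩) (b := ⟨(y:ℕ) - a, hy⟩) (Fin.mk_le_mk.mpr (by omega))
    simp only [splitE_snd] at this
    have e1 : (⟨a + ((x:ℕ) - a), by omega⟩ : Fin N) = x := Fin.ext (by simp; omega)
    have e2 : (⟨a + ((y:ℕ) - a), by omega⟩ : Fin N) = y := Fin.ext (by simp; omega)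
    rwa [e1, e2] at this
  · intro h m m' hmm'
    simp only [splitE_snd]
    exact h ⟨a + m, by have := m.isLt; omega⟩ ⟨a + m', by have := m'.isLt; omega⟩
      (Nat.le_add_right a m)
      (show a + (m:ℕ) ≤ a + (m':ℕ) by have := Fin.le_def.mp hmm'; omega)

lemma prodSplit {M : Type*} [CommMonoid M] (a b N : ℕ) (hab : a + b = N) (u : Fin N → M) :
    (∏ m : Fin N, u m) =
      (∏ m : Fin a, u ⟨m, by have := m.isLt; omega⟩) *
        ∏ m : Fin b, u ⟨a + m, by have := m.isLt; omega⟩ := by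
  subst hab
  rw [Fin.prod_univ_add]
  rfl

lemma Lser_eq (f : ℕ → ℕ → R) (a b c : ℕ) (h : b + 1 - a = c) :
    Lser f a b = ∑' g : Fin c → ℕ,
      Set.indicator {g : Fin c → ℕ | StrictAnti g}
        (fun g => ∏ m : Fin c, f (a + (m : ℕ)) (g m)) g := by
  subst h
  exact tsum_subtype {g : Fin (b + 1 - a) → ℕ | StrictAnti g}
    (fun g => ∏ m : Fin (b + 1 - a), f (a + (m : ℕ)) (g m))

lemma Lstar_eq (f : ℕ → ℕ → R) (a b c : ℕ) (h : b + 1 - a = c) :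
    Lstar f a b = ∑' g : Fin c → ℕ,
      Set.indicator {g : Fin c → ℕ | Monotone g}
        (fun g => ∏ m : Fin c, f (a + (m : ℕ)) (g m)) g := by
  subst h
  exact tsum_subtype {g : Fin (b + 1 - a) → ℕ | Monotone g}
    (fun g => ∏ m : Fin (b + 1 - a), f (a + (m : ℕ)) (g m))

end Bridge

/-- For all integers `1 ≤ ℓ ≤ j ≤ n`, the identity
`(−1)^ℓ · L*(ℓ,j) = Σ_{k=ℓ+1}^{j} (−1)^{k−1} · L(ℓ,k−1) · L*(k,j) + (−1)^j · L(ℓ,j)`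
holds in the complete nonarchimedean normed commutative ring `R`. -/
theorem stmt0 {R : Type*} [NormedCommRing R] [IsUltrametricDist R] [CompleteSpace R]
    (n : ℕ) (hn : 1 ≤ n) (f : ℕ → ℕ → R)
    (hf : ∀ m, 1 ≤ m → m ≤ n → Filter.Tendsto (fun i => ‖f m i‖) Filter.atTop (nhds 0))
    (ℓ j : ℕ) (hℓ : 1 ≤ ℓ) (hℓj : ℓ ≤ j) (hj : j ≤ n) :
    (-1 : R) ^ ℓ * Lstar f ℓ j =
      (∑ k ∈ Finset.Icc (ℓ + 1) j,
        (-1 : R) ^ (k - 1) * Lser f ℓ (k - 1) * Lstar f k j)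
        + (-1 : R) ^ j * Lser f ℓ j := by
  have hN1 : 1 ≤ j + 1 - ℓ := by omega
  -- tendsto and summability for the basic families
  have hten : ∀ (a c : ℕ), 1 ≤ a → a + c ≤ n + 1 →
      Filter.Tendsto (fun g : Fin c → ℕ => ∏ m : Fin c, f (a + (m : ℕ)) (g m))
        Filter.cofinite (nhds 0) := by
    intro a c ha hc
    exact aux_prod_tendsto c (fun m i => f (a + (m : ℕ)) i)
      (fun m => hf (a + (m : ℕ)) (by omega) (by have := m.isLt; omega))
  have hsumInd : ∀ (a c : ℕ) (s : Set (Fin c → ℕ)), 1 ≤ a → a + c ≤ n + 1 →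
      Summable (s.indicator (fun g : Fin c → ℕ => ∏ m : Fin c, f (a + (m : ℕ)) (g m))) := by
    intro a c s ha hc
    apply aux_summable
    apply squeeze_zero_norm (a := fun g : Fin c → ℕ => ‖∏ m : Fin c, f (a + (m : ℕ)) (g m)‖)
      (fun g => norm_indicator_le_norm_self (s := s) _ _)
    simpa using (hten a c ha hc).norm
  -- summability of ite-form families
  have hsumIte : ∀ (p : ℕ), Summable (fun i : Fin (j + 1 - ℓ) → ℕ =>
      if Cnd (j + 1 - ℓ) p i then ∏ m : Fin (j + 1 - ℓ), f (ℓ + (m : ℕ)) (i m) else 0) := by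
    intro p
    have heq : (fun i : Fin (j + 1 - ℓ) → ℕ =>
        if Cnd (j + 1 - ℓ) p i then ∏ m : Fin (j + 1 - ℓ), f (ℓ + (m : ℕ)) (i m) else 0)
        = Set.indicator {i : Fin (j + 1 - ℓ) → ℕ | Cnd (j + 1 - ℓ) p i}
            (fun i => ∏ m : Fin (j + 1 - ℓ), f (ℓ + (m : ℕ)) (i m)) := by
      funext i
      by_cases h : Cnd (j + 1 - ℓ) p i
      · rw [if_pos h, Set.indicator_of_mem
          (show i ∈ {i : Fin (j + 1 - ℓ) → ℕ | Cnd (j + 1 - ℓ) p i} from h)]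
      · rw [if_neg h, Set.indicator_of_notMem
          (show i ∉ {i : Fin (j + 1 - ℓ) → ℕ | Cnd (j + 1 - ℓ) p i} from h)]
    rw [heq]
    exact hsumInd ℓ (j + 1 - ℓ) _ hℓ (by omega)
  -- conversion of the middle terms
  have hmid : ∀ k ∈ Finset.Icc (ℓ + 1) j,
      (-1 : R) ^ (k - 1) * Lser f ℓ (k - 1) * Lstar f k j
        = ∑' i : Fin (j + 1 - ℓ) → ℕ, (-1 : R) ^ (k - 1) *
            (if Cnd (j + 1 - ℓ) (k - ℓ) i
              then ∏ m : Fin (j + 1 - ℓ), f (ℓ + (m : ℕ)) (i m) else 0) := by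
    intro k hk
    obtain ⟨hk1, hk2⟩ := Finset.mem_Icc.mp hk
    have hab : (k - ℓ) + (j + 1 - k) = j + 1 - ℓ := by omega
    set a := k - ℓ with hadef
    set b := j + 1 - k with hbdef
    set indA := Set.indicator {g : Fin a → ℕ | StrictAnti g}
      (fun g => ∏ m : Fin a, f (ℓ + (m : ℕ)) (g m)) with hindA
    set indB := Set.indicator {g : Fin b → ℕ | Monotone g}
      (fun g => ∏ m : Fin b, f (k + (m : ℕ)) (g m)) with hindB
    have hA : Lser f ℓ (k - 1) = ∑' g : Fin a → ℕ, indA g := Lser_eq f ℓ (k - 1) a (by omega)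
    have hB : Lstar f k j = ∑' g : Fin b → ℕ, indB g := Lstar_eq f k j b (by omega)
    have hSa : Summable indA := hsumInd ℓ a _ hℓ (by omega)
    have hSb : Summable indB := hsumInd k b _ (by omega) (by omega)
    have hSpair : Summable (fun z : (Fin a → ℕ) × (Fin b → ℕ) => indA z.1 * indB z.2) := by
      apply aux_summable
      have hb := aux_pair_tendsto (hten ℓ a hℓ (by omega)) (hten k b (by omega) (by omega))
      apply squeeze_zero_norm _ hb
      intro z
      refine (norm_mul_le _ _).trans ?_
      exact mul_le_mul (norm_indicator_le_norm_self _ _) (norm_indicator_le_norm_self _ _)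
        (norm_nonneg _) (norm_nonneg _)
    have hkey : ∀ i : Fin (j + 1 - ℓ) → ℕ,
        indA ((splitE a b (j + 1 - ℓ) hab) i).1 * indB ((splitE a b (j + 1 - ℓ) hab) i).2
          = if Cnd (j + 1 - ℓ) a i
              then ∏ m : Fin (j + 1 - ℓ), f (ℓ + (m : ℕ)) (i m) else 0 := by
      intro i
      by_cases hc : Cnd (j + 1 - ℓ) a i
      · rw [if_pos hc, hindA, hindB,
          Set.indicator_of_mem (show ((splitE a b (j + 1 - ℓ) hab) i).1 ∈
            {g : Fin a → ℕ | StrictAnti g} from (bridgeA a b (j + 1 - ℓ) hab i).mpr hc.1),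
          Set.indicator_of_mem (show ((splitE a b (j + 1 - ℓ) hab) i).2 ∈
            {g : Fin b → ℕ | Monotone g} from (bridgeB a b (j + 1 - ℓ) hab i).mpr hc.2),
          prodSplit a b (j + 1 - ℓ) hab (fun m => f (ℓ + (m : ℕ)) (i m))]
        congr 1
        apply Finset.prod_congr rfl
        intro m _
        exact congrArg₂ f (show k + (m:ℕ) = ℓ + (a + (m:ℕ)) by omega) rfl
      · rw [if_neg hc]
        by_cases h1 : ((splitE a b (j + 1 - ℓ) hab) i).1 ∈ {g : Fin a → ℕ | StrictAnti g}
        · have h2 : ((splitE a b (j + 1 - ℓ) hab) i).2 ∉ {g : Fin b → ℕ | Monotone g} := by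
            intro h2
            exact hc ⟨(bridgeA a b (j + 1 - ℓ) hab i).mp h1,
              (bridgeB a b (j + 1 - ℓ) hab i).mp h2⟩
          rw [hindB, Set.indicator_of_notMem h2, mul_zero]
        · rw [hindA, Set.indicator_of_notMem h1, zero_mul]
    calc (-1 : R) ^ (k - 1) * Lser f ℓ (k - 1) * Lstar f k j
        = (-1 : R) ^ (k - 1) * ((∑' g : Fin a → ℕ, indA g) * (∑' g : Fin b → ℕ, indB g)) := by
          rw [hA, hB, mul_assoc]
      _ = (-1 : R) ^ (k - 1) *
            ∑' z : (Fin a → ℕ) × (Fin b → ℕ), indA z.1 * indB z.2 := by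
          rw [Summable.tsum_mul_tsum hSa hSb hSpair]
      _ = (-1 : R) ^ (k - 1) * ∑' i : Fin (j + 1 - ℓ) → ℕ,
            indA ((splitE a b (j + 1 - ℓ) hab) i).1 * indB ((splitE a b (j + 1 - ℓ) hab) i).2 := by
          rw [Equiv.tsum_eq (splitE a b (j + 1 - ℓ) hab)
            (fun z : (Fin a → ℕ) × (Fin b → ℕ) => indA z.1 * indB z.2)]
      _ = ∑' i : Fin (j + 1 - ℓ) → ℕ, (-1 : R) ^ (k - 1) *
            (if Cnd (j + 1 - ℓ) a i
              then ∏ m : Fin (j + 1 - ℓ), f (ℓ + (m : ℕ)) (i m) else 0) := by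
          have hSE : Summable (fun i : Fin (j + 1 - ℓ) → ℕ =>
              indA ((splitE a b (j + 1 - ℓ) hab) i).1 * indB ((splitE a b (j + 1 - ℓ) hab) i).2) :=
            (Equiv.summable_iff (splitE a b (j + 1 - ℓ) hab)).mpr hSpair
          rw [← Summable.tsum_mul_left _ hSE]
          exact tsum_congr fun i => by rw [hkey i]
  -- conversion of left side
  have hL : (-1 : R) ^ ℓ * Lstar f ℓ j = ∑' i : Fin (j + 1 - ℓ) → ℕ, (-1 : R) ^ ℓ *
      (if Cnd (j + 1 - ℓ) 0 i then ∏ m : Fin (j + 1 - ℓ), f (ℓ + (m : ℕ)) (i m) else 0) := by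
    rw [Lstar_eq f ℓ j (j + 1 - ℓ) rfl,
      ← Summable.tsum_mul_left _ (hsumInd ℓ (j + 1 - ℓ) {g : Fin (j + 1 - ℓ) → ℕ | Monotone g} hℓ (by omega))]
    refine tsum_congr fun i => ?_
    congr 1
    by_cases h : Monotone i
    · rw [Set.indicator_of_mem
        (show i ∈ {g : Fin (j + 1 - ℓ) → ℕ | Monotone g} from h),
        if_pos ((cnd_zero (j + 1 - ℓ) i).mpr h)]
    · rw [Set.indicator_of_notMem
        (show i ∉ {g : Fin (j + 1 - ℓ) → ℕ | Monotone g} from h),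
        if_neg (fun hc => h ((cnd_zero (j + 1 - ℓ) i).mp hc))]
  -- conversion of the last term
  have hR : (-1 : R) ^ j * Lser f ℓ j = ∑' i : Fin (j + 1 - ℓ) → ℕ, (-1 : R) ^ j *
      (if Cnd (j + 1 - ℓ) (j + 1 - ℓ) i
        then ∏ m : Fin (j + 1 - ℓ), f (ℓ + (m : ℕ)) (i m) else 0) := by
    rw [Lser_eq f ℓ j (j + 1 - ℓ) rfl,
      ← Summable.tsum_mul_left _ (hsumInd ℓ (j + 1 - ℓ) {g : Fin (j + 1 - ℓ) → ℕ | StrictAnti g} hℓ (by omega))]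
    refine tsum_congr fun i => ?_
    congr 1
    by_cases h : StrictAnti i
    · rw [Set.indicator_of_mem
        (show i ∈ {g : Fin (j + 1 - ℓ) → ℕ | StrictAnti g} from h),
        if_pos ((cnd_top (j + 1 - ℓ) i).mpr h)]
    · rw [Set.indicator_of_notMem
        (show i ∉ {g : Fin (j + 1 - ℓ) → ℕ | StrictAnti g} from h),
        if_neg (fun hc => h ((cnd_top (j + 1 - ℓ) i).mp hc))]
  -- pointwise identity
  have hptwise : ∀ i : Fin (j + 1 - ℓ) → ℕ,
      (-1 : R) ^ ℓ *
        (if Cnd (j + 1 - ℓ) 0 i then ∏ m : Fin (j + 1 - ℓ), f (ℓ + (m : ℕ)) (i m) else 0)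
      = (∑ k ∈ Finset.Icc (ℓ + 1) j, (-1 : R) ^ (k - 1) *
          (if Cnd (j + 1 - ℓ) (k - ℓ) i
            then ∏ m : Fin (j + 1 - ℓ), f (ℓ + (m : ℕ)) (i m) else 0))
        + (-1 : R) ^ j *
          (if Cnd (j + 1 - ℓ) (j + 1 - ℓ) i
            then ∏ m : Fin (j + 1 - ℓ), f (ℓ + (m : ℕ)) (i m) else 0) := by
    intro i
    have hcore := core_cancel (R := R) (j + 1 - ℓ) hN1 (fun p => Cnd (j + 1 - ℓ) p i)
      (fun p q hp hq hpq hqN => cnd_adj (j + 1 - ℓ) p q i hp hq hpq hqN)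
      (fun p hp hC => cnd_nbr (j + 1 - ℓ) p hN1 i hp hC)
    set F : R := ∏ m : Fin (j + 1 - ℓ), f (ℓ + (m : ℕ)) (i m) with hFdef
    set χ : ℕ → R := fun p => if Cnd (j + 1 - ℓ) p i then (1 : R) else 0 with hχ
    have hite : ∀ p, (if Cnd (j + 1 - ℓ) p i then F else 0) = χ p * F := by
      intro p
      by_cases h : Cnd (j + 1 - ℓ) p i <;> simp [hχ, h]
    rw [hite, hite]
    have hmidite : ∀ k ∈ Finset.Icc (ℓ + 1) j,
        (-1 : R) ^ (k - 1) * (if Cnd (j + 1 - ℓ) (k - ℓ) i then F else 0)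
          = (-1 : R) ^ (k - 1) * (χ (k - ℓ) * F) := by
      intro k _
      rw [hite]
    rw [Finset.sum_congr rfl hmidite]
    -- coefficient identity
    have hcore' : ∑ p ∈ Finset.range ((j + 1 - ℓ) + 1), (-1 : R) ^ p * χ p = 0 := hcore
    have e1 : ∑ p ∈ Finset.range ((j + 1 - ℓ) + 1), (-1 : R) ^ p * χ p
        = (-1 : R) ^ 0 * χ 0
          + (∑ p ∈ Finset.range (j - ℓ), (-1 : R) ^ (p + 1) * χ (p + 1))
          + (-1 : R) ^ (j + 1 - ℓ) * χ (j + 1 - ℓ) := by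
      rw [show (j + 1 - ℓ) + 1 = ((j - ℓ) + 1) + 1 from by omega, Finset.sum_range_succ,
        Finset.sum_range_succ']
      rw [show (j - ℓ) + 1 = j + 1 - ℓ from by omega]
      ring
    have e2 : ∑ p ∈ Finset.range (j - ℓ), (-1 : R) ^ (p + 1) * χ (p + 1)
        = ∑ k ∈ Finset.Icc (ℓ + 1) j, (-1 : R) ^ (k - ℓ) * χ (k - ℓ) := by
      refine Finset.sum_nbij' (i := fun p => p + ℓ + 1) (j := fun k => k - ℓ - 1) ?_ ?_ ?_ ?_ ?_
      · intro p hp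
        rw [Finset.mem_range] at hp
        rw [Finset.mem_Icc]
        omega
      · intro k hk
        rw [Finset.mem_Icc] at hk
        rw [Finset.mem_range]
        omega
      · intro p hp
        rw [Finset.mem_range] at hp
        omega
      · intro k hk
        rw [Finset.mem_Icc] at hk
        omega
      · intro p hp
        rw [show p + ℓ + 1 - ℓ = p + 1 from by omega]
    have hkey : (-1 : R) ^ ℓ * χ 0
        = (∑ k ∈ Finset.Icc (ℓ + 1) j, (-1 : R) ^ (k - 1) * χ (k - ℓ))
          + (-1 : R) ^ j * χ (j + 1 - ℓ) := by
      have hmul := congrArg (fun x => (-1 : R) ^ ℓ * x) hcore'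
      simp only [mul_zero] at hmul
      rw [e1, e2] at hmul
      rw [mul_add, mul_add, Finset.mul_sum] at hmul
      have e4 : ∀ k ∈ Finset.Icc (ℓ + 1) j,
          (-1 : R) ^ ℓ * ((-1 : R) ^ (k - ℓ) * χ (k - ℓ))
            = -((-1 : R) ^ (k - 1) * χ (k - ℓ)) := by
        intro k hk
        obtain ⟨hk1, hk2⟩ := Finset.mem_Icc.mp hk
        rw [← mul_assoc, ← pow_add, show ℓ + (k - ℓ) = (k - 1) + 1 from by omega, pow_succ]
        ring
      rw [Finset.sum_congr rfl e4] at hmul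
      have e5 : (-1 : R) ^ ℓ * ((-1 : R) ^ (j + 1 - ℓ) * χ (j + 1 - ℓ))
          = -((-1 : R) ^ j * χ (j + 1 - ℓ)) := by
        rw [← mul_assoc, ← pow_add, show ℓ + (j + 1 - ℓ) = j + 1 from by omega, pow_succ]
        ring
      rw [e5] at hmul
      rw [Finset.sum_neg_distrib] at hmul
      have : (-1 : R) ^ ℓ * ((-1 : R) ^ 0 * χ 0)
          - (∑ k ∈ Finset.Icc (ℓ + 1) j, (-1 : R) ^ (k - 1) * χ (k - ℓ))
          - (-1 : R) ^ j * χ (j + 1 - ℓ) = 0 := by linear_combination hmul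
      simp only [pow_zero, one_mul] at this
      linear_combination this
    have hsummul : ∑ k ∈ Finset.Icc (ℓ + 1) j, (-1 : R) ^ (k - 1) * (χ (k - ℓ) * F)
        = (∑ k ∈ Finset.Icc (ℓ + 1) j, (-1 : R) ^ (k - 1) * χ (k - ℓ)) * F := by
      rw [Finset.sum_mul]
      exact Finset.sum_congr rfl fun k _ => by ring
    rw [hsummul]
    linear_combination hkey * F
  -- assemble everything
  rw [hL, Finset.sum_congr rfl hmid, hR]
  rw [← Summable.tsum_finsetSum (fun k hk => Summable.mul_left _ (hsumIte (k - ℓ)))]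
  rw [← Summable.tsum_add (summable_sum (fun k hk => Summable.mul_left _ (hsumIte (k - ℓ))))
    (Summable.mul_left _ (hsumIte (j + 1 - ℓ)))]
  exact tsum_congr hptwise
end

section
/- For all integers 1 ≤ ℓ ≤ j ≤ n, the identity (−1)^j · L*(ℓ,j) = Σ_{k=ℓ+1}^{j} (−1)^k · L(k,j) · L*(ℓ,k−1) + (−1)^ℓ · L(ℓ,j) holds in R. -/
open scoped BigOperators

section AuxLemmas

open Filter Topology

variable {R : Type*} [NormedCommRing R]

/-- Master summability: products over tuples of families of vanishing sequences. -/
lemma aux_summable_prod [IsUltrametricDist R] [CompleteSpace R] {m : ℕ} (h : Fin m → ℕ → R)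
    (hh : ∀ i, Tendsto (fun x => ‖h i x‖) atTop (nhds 0)) :
    Summable (fun a : Fin m → ℕ => ∏ i, h i (a i)) := by
  apply NonarchimedeanAddGroup.summable_of_tendsto_cofinite_zero
  rw [NormedAddCommGroup.tendsto_nhds_zero]
  -- bounds
  have hbdd : ∀ i, ∃ C : ℝ, 1 ≤ C ∧ ∀ x, ‖h i x‖ ≤ C := by
    intro i
    obtain ⟨C, hC⟩ := (hh i).bddAbove_range
    exact ⟨max 1 C, le_max_left _ _, fun x =>
      le_trans (hC (Set.mem_range_self x)) (le_max_right _ _)⟩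
  choose C hC1 hC2 using hbdd
  set D : ℝ := ∏ i, C i with hD
  have hD1 : (1:ℝ) ≤ D := by
    rw [hD]
    have := Finset.prod_le_prod (s := (Finset.univ : Finset (Fin m)))
      (f := fun _ => (1:ℝ)) (g := C) (by intro i _; norm_num) (fun i _ => hC1 i)
    simpa using this
  have hbound : ∀ (a : Fin m → ℕ) (i : Fin m),
      ‖∏ i', h i' (a i')‖ ≤ ‖h i (a i)‖ * D := by
    intro a i
    refine le_trans (Finset.norm_prod_le' Finset.univ ⟨i, Finset.mem_univ i⟩ (fun i' => h i' (a i'))) ?_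
    rw [← Finset.mul_prod_erase Finset.univ (fun i' => ‖h i' (a i')‖) (Finset.mem_univ i)]
    apply mul_le_mul_of_nonneg_left _ (norm_nonneg _)
    refine le_trans (Finset.prod_le_prod (fun _ _ => norm_nonneg _) (fun i' _ => hC2 i' (a i'))) ?_
    rw [hD, ← Finset.mul_prod_erase Finset.univ C (Finset.mem_univ i)]
    exact le_mul_of_one_le_left
      (Finset.prod_nonneg fun i' _ => le_trans zero_le_one (hC1 i')) (hC1 i)
  intro ε hε
  rw [Filter.eventually_cofinite]
  have hδ : 0 < ε / D := div_pos hε (lt_of_lt_of_le one_pos hD1)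
  have hFin : ∀ i, {x : ℕ | ε / D ≤ ‖h i x‖}.Finite := by
    intro i
    have := hh i
    rw [← Nat.cofinite_eq_atTop] at this
    have hev := (NormedAddCommGroup.tendsto_nhds_zero.mp this) (ε / D) hδ
    rw [Filter.eventually_cofinite] at hev
    refine hev.subset ?_
    intro x hx
    simp only [Set.mem_setOf_eq, not_lt] at hx ⊢
    simpa using hx
  refine (Set.Finite.pi (fun i => hFin i)).subset ?_
  intro a ha
  simp only [Set.mem_setOf_eq, not_lt] at ha
  rw [Set.mem_univ_pi]
  intro i
  have h1 := hbound a i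
  have h2 : ε ≤ ‖h i (a i)‖ * D := le_trans ha h1
  simp only [Set.mem_setOf_eq]
  rw [div_le_iff₀ (lt_of_lt_of_le one_pos hD1)]
  exact h2

/-- Index type for pairs of a strictly decreasing and a weakly increasing tuple. -/
abbrev PQI (c e : ℕ) : Type :=
  {a : Fin c → ℕ // StrictAnti a} × {b : Fin e → ℕ // Monotone b}

/-- The "P side" condition: every entry of the increasing tuple is at most some entry
of the decreasing tuple. -/
def pcond {c e : ℕ} (z : PQI c e) : Prop :=
  ∃ m : Fin c, ∀ i : Fin e, z.2.1 i ≤ z.1.1 m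

noncomputable def Pterm {R : Type*} [NormedCommRing R] {c e : ℕ}
    (u : Fin c → ℕ → R) (v : Fin e → ℕ → R) : R :=
  ∑' x : {z : PQI c e | pcond z}, (∏ i, u i (x.1.1.1 i)) * ∏ i, v i (x.1.2.1 i)

noncomputable def Qterm {R : Type*} [NormedCommRing R] {c e : ℕ}
    (u : Fin c → ℕ → R) (v : Fin e → ℕ → R) : R :=
  ∑' x : ↥({z : PQI c e | pcond z}ᶜ), (∏ i, u i (x.1.1.1 i)) * ∏ i, v i (x.1.2.1 i)

lemma summable_pqi [IsUltrametricDist R] [CompleteSpace R] {c e : ℕ}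
    (u : Fin c → ℕ → R) (v : Fin e → ℕ → R)
    (hu : ∀ i, Tendsto (fun x => ‖u i x‖) atTop (nhds 0))
    (hv : ∀ i, Tendsto (fun x => ‖v i x‖) atTop (nhds 0)) :
    Summable (fun z : PQI c e => (∏ i, u i (z.1.1 i)) * ∏ i, v i (z.2.1 i)) := by
  set H : Fin (c + e) → ℕ → R := Fin.addCases u v with hH
  have hHt : ∀ i, Tendsto (fun x => ‖H i x‖) atTop (nhds 0) := by
    intro i
    refine Fin.addCases (fun i => ?_) (fun i => ?_) i
    · simp only [hH, Fin.addCases_left]; exact hu i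
    · simp only [hH, Fin.addCases_right]; exact hv i
  have hφ : Function.Injective
      (fun z : PQI c e => Fin.append z.1.1 z.2.1) := by
    intro z w hzw
    have h1 : z.1.1 = w.1.1 := funext fun i => by
      have := congrFun hzw (Fin.castAdd e i)
      simpa [Fin.append_left] using this
    have h2 : z.2.1 = w.2.1 := funext fun i => by
      have := congrFun hzw (Fin.natAdd c i)
      simpa [Fin.append_right] using this
    exact Prod.ext (Subtype.ext h1) (Subtype.ext h2)
  have := (aux_summable_prod H hHt).comp_injective hφ
  refine this.congr fun z => ?_
  show ∏ i : Fin (c + e), H i (Fin.append z.1.1 z.2.1 i) = _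
  rw [Fin.prod_univ_add]
  congr 1
  · exact Finset.prod_congr rfl fun i _ => by
      simp [hH, Fin.addCases_left, Fin.append_left]
  · exact Finset.prod_congr rfl fun i _ => by
      simp [hH, Fin.addCases_right, Fin.append_right]

lemma LL_split [IsUltrametricDist R] [CompleteSpace R] {c e : ℕ}
    (u : Fin c → ℕ → R) (v : Fin e → ℕ → R)
    (hu : ∀ i, Tendsto (fun x => ‖u i x‖) atTop (nhds 0))
    (hv : ∀ i, Tendsto (fun x => ‖v i x‖) atTop (nhds 0)) :
    (∑' a : {a : Fin c → ℕ // StrictAnti a}, ∏ i, u i (a.1 i)) *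
      (∑' b : {b : Fin e → ℕ // Monotone b}, ∏ i, v i (b.1 i)) =
    Pterm u v + Qterm u v := by
  have hA : Summable (fun a : {a : Fin c → ℕ // StrictAnti a} => ∏ i, u i (a.1 i)) :=
    (aux_summable_prod u hu).comp_injective Subtype.val_injective
  have hB : Summable (fun b : {b : Fin e → ℕ // Monotone b} => ∏ i, v i (b.1 i)) :=
    (aux_summable_prod v hv).comp_injective Subtype.val_injective
  have hAB := summable_pqi u v hu hv
  rw [Summable.tsum_mul_tsum hA hB hAB]
  exact (Summable.tsum_add_tsum_compl (hAB.subtype _) (hAB.subtype _)).symm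

lemma monotone_snoc_of {e : ℕ} {b : Fin e → ℕ} (hb : Monotone b) (x : ℕ)
    (hx : ∀ i, b i ≤ x) : Monotone (Fin.snoc b x) := by
  rw [Fin.monotone_iff_le_succ]
  intro i
  rcases Fin.eq_castSucc_or_eq_last i.succ with ⟨p, hp⟩ | hp
  · rw [hp, Fin.snoc_castSucc, Fin.snoc_castSucc]
    apply hb
    have h1 : (p : ℕ) = (i : ℕ) + 1 := by
      have := congrArg Fin.val hp
      simpa using this.symm
    exact Fin.le_def.mpr (by omega)
  · rw [hp, Fin.snoc_last, Fin.snoc_castSucc]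
    exact hx i

lemma strictAnti_cons_of {d : ℕ} {a : Fin d → ℕ} (ha : StrictAnti a) (x : ℕ)
    (hx : ∀ m, a m < x) : StrictAnti (Fin.cons x a) := by
  rw [Fin.strictAnti_iff_succ_lt]
  intro i
  rw [Fin.cons_succ]
  rcases i with ⟨iv, hiv⟩
  cases iv with
  | zero =>
    have h0 : Fin.castSucc (⟨0, hiv⟩ : Fin d) = 0 := rfl
    rw [h0, Fin.cons_zero]
    exact hx _
  | succ p =>
    have h0 : Fin.castSucc (⟨p + 1, hiv⟩ : Fin d)
        = Fin.succ (⟨p, by omega⟩ : Fin d) := rfl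
    rw [h0, Fin.cons_succ]
    exact ha (show (⟨p, by omega⟩ : Fin d) < ⟨p + 1, hiv⟩ from by
      simp [Fin.lt_def])

/-- The sign-reversing pairing: move the top entry of the decreasing tuple to the end of the
increasing tuple. -/
noncomputable def pairEquiv (d e : ℕ) :
    {z : PQI (d+1) e | pcond z} ≃ ↥({z : PQI d (e+1) | pcond z}ᶜ) where
  toFun x :=
    ⟨⟨⟨fun i => x.1.1.1 i.succ, x.1.1.2.comp_strictMono Fin.strictMono_succ⟩,
      ⟨Fin.snoc x.1.2.1 (x.1.1.1 0), monotone_snoc_of x.1.2.2 _ (by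
        obtain ⟨m, hm⟩ := x.2
        intro i
        exact le_trans (hm i) (x.1.1.2.antitone (Fin.zero_le m)))⟩⟩, by
      rintro ⟨m, hm⟩
      have h1 := hm (Fin.last e)
      simp only [Fin.snoc_last] at h1
      exact absurd h1 (not_le.mpr (x.1.1.2 (Fin.succ_pos m)))⟩
  invFun y :=
    ⟨⟨⟨Fin.cons (y.1.2.1 (Fin.last e)) y.1.1.1, by
        refine strictAnti_cons_of y.1.1.2 _ (fun m => ?_)
        have := y.2
        simp only [Set.mem_compl_iff, Set.mem_setOf_eq, pcond, not_exists, not_forall] at this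
        obtain ⟨i, hi⟩ := this m
        exact lt_of_lt_of_le (not_le.mp hi) (y.1.2.2 (Fin.le_last i))⟩,
      ⟨fun i => y.1.2.1 i.castSucc, y.1.2.2.comp Fin.strictMono_castSucc.monotone⟩⟩,
      ⟨0, fun i => by
        simp only [Fin.cons_zero]
        exact y.1.2.2 (Fin.le_last _)⟩⟩
  left_inv x := by
    obtain ⟨⟨⟨a, ha⟩, ⟨b, hb⟩⟩, hx⟩ := x
    refine Subtype.ext (Prod.ext (Subtype.ext ?_) (Subtype.ext ?_))
    · dsimp only
      rw [Fin.snoc_last]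
      exact Fin.cons_self_tail a
    · dsimp only
      funext i
      rw [Fin.snoc_castSucc]
  right_inv y := by
    obtain ⟨⟨⟨a, ha⟩, ⟨b, hb⟩⟩, hy⟩ := y
    refine Subtype.ext (Prod.ext (Subtype.ext ?_) (Subtype.ext ?_))
    · dsimp only
      funext i
      rw [Fin.cons_succ]
    · dsimp only
      rw [Fin.cons_zero]
      exact Fin.snoc_init_self b

lemma Pterm_eq_Qterm {d e : ℕ} (u : Fin (d+1) → ℕ → R) (v : Fin e → ℕ → R)
    (u' : Fin d → ℕ → R) (v' : Fin (e+1) → ℕ → R)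
    (hu' : ∀ i : Fin d, u' i = u i.succ)
    (hvc : ∀ i : Fin e, v' i.castSucc = v i)
    (hvl : v' (Fin.last e) = u 0) :
    Pterm u v = Qterm u' v' := by
  unfold Pterm Qterm
  rw [← Equiv.tsum_eq (pairEquiv d e)]
  apply tsum_congr
  rintro ⟨⟨⟨a, ha⟩, ⟨b, hb⟩⟩, hx⟩
  simp only [pairEquiv, Equiv.coe_fn_mk]
  have hR1 : ∏ x : Fin d, u' x (a x.succ) = ∏ x : Fin d, u x.succ (a x.succ) :=
    Finset.prod_congr rfl fun i _ => by rw [hu' i]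
  have hR2 : ∏ x : Fin (e+1), v' x ((Fin.snoc b (a 0) : Fin (e+1) → ℕ) x)
      = (∏ x : Fin e, v x (b x)) * u 0 (a 0) := by
    rw [Fin.prod_univ_castSucc]
    congr 1
    · exact Finset.prod_congr rfl fun i _ => by rw [Fin.snoc_castSucc, hvc i]
    · rw [Fin.snoc_last, hvl]
  rw [hR1, hR2, Fin.prod_univ_succ (fun i : Fin (d+1) => u i (a i))]
  ring

lemma Lser_aux (f : ℕ → ℕ → R) (ℓ j c : ℕ) (h : j + 1 - ℓ = c) :
    Lser f ℓ j = ∑' g : {g : Fin c → ℕ // StrictAnti g},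
      ∏ m : Fin c, f (ℓ + (m : ℕ)) (g.1 m) := by subst h; rfl

lemma Lstar_aux (f : ℕ → ℕ → R) (ℓ j c : ℕ) (h : j + 1 - ℓ = c) :
    Lstar f ℓ j = ∑' g : {g : Fin c → ℕ // Monotone g},
      ∏ m : Fin c, f (ℓ + (m : ℕ)) (g.1 m) := by subst h; rfl

lemma tsum_subtype_fin_zero (p : (Fin 0 → ℕ) → Prop) (hp : ∀ g, p g)
    (F : {g : Fin 0 → ℕ // p g} → R) (hF : ∀ x, F x = 1) : ∑' x, F x = 1 := by
  have hu : ∀ x y : {g : Fin 0 → ℕ // p g}, x = y := fun x y =>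
    Subtype.ext (funext fun i => i.elim0)
  rw [tsum_eq_single ⟨(fun i => i.elim0), hp _⟩ (fun b hb => absurd (hu b _) hb)]
  exact hF _

lemma Lstar_bot (f : ℕ → ℕ → R) (ℓ k : ℕ) (h : k + 1 - ℓ = 0) : Lstar f ℓ k = 1 := by
  rw [Lstar_aux f ℓ k 0 h]
  exact tsum_subtype_fin_zero _ (fun g a b _ => a.elim0) _ (fun x => by simp)

lemma Lser_top (f : ℕ → ℕ → R) (k j : ℕ) (h : j + 1 - k = 0) : Lser f k j = 1 := by
  rw [Lser_aux f k j 0 h]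
  exact tsum_subtype_fin_zero _ (fun g a b _ => a.elim0) _ (fun x => by simp)

noncomputable def PPk {R : Type*} [NormedCommRing R] (f : ℕ → ℕ → R) (ℓ j k : ℕ) : R :=
  Pterm (fun i : Fin (j + 1 - k) => f (k + (i : ℕ))) (fun i : Fin (k - ℓ) => f (ℓ + (i : ℕ)))

noncomputable def QQk {R : Type*} [NormedCommRing R] (f : ℕ → ℕ → R) (ℓ j k : ℕ) : R :=
  Qterm (fun i : Fin (j + 1 - k) => f (k + (i : ℕ))) (fun i : Fin (k - ℓ) => f (ℓ + (i : ℕ)))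

end AuxLemmas

/-- For all integers `1 ≤ ℓ ≤ j ≤ n`, the identity
`(−1)^j · L*(ℓ,j) = Σ_{k=ℓ+1}^{j} (−1)^k · L(k,j) · L*(ℓ,k−1) + (−1)^ℓ · L(ℓ,j)`
holds in the complete nonarchimedean normed commutative ring `R`. -/
theorem stmt1 {R : Type*} [NormedCommRing R] [IsUltrametricDist R] [CompleteSpace R]
    (n : ℕ) (hn : 1 ≤ n) (f : ℕ → ℕ → R)
    (hf : ∀ m, 1 ≤ m → m ≤ n → Filter.Tendsto (fun i => ‖f m i‖) Filter.atTop (nhds 0))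
    (ℓ j : ℕ) (hℓ : 1 ≤ ℓ) (hℓj : ℓ ≤ j) (hj : j ≤ n) :
    (-1 : R) ^ j * Lstar f ℓ j =
      (∑ k ∈ Finset.Icc (ℓ + 1) j,
        (-1 : R) ^ k * Lser f k j * Lstar f ℓ (k - 1))
        + (-1 : R) ^ ℓ * Lser f ℓ j := by
  classical
  have key : ∀ k, ℓ ≤ k → k ≤ j + 1 →
      Lser f k j * Lstar f ℓ (k - 1) = PPk f ℓ j k + QQk f ℓ j k := by
    intro k h1 h2
    rw [Lser_aux f k j (j + 1 - k) rfl, Lstar_aux f ℓ (k - 1) (k - ℓ) (by omega)]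
    unfold PPk QQk
    exact LL_split _ _
      (fun i => hf (k + (i : ℕ)) (by omega) (by have := i.isLt; omega))
      (fun i => hf (ℓ + (i : ℕ)) (by omega) (by have := i.isLt; omega))
  have hPQ : ∀ k, ℓ ≤ k → k ≤ j → PPk f ℓ j k = QQk f ℓ j (k + 1) := by
    intro k h1 h2
    unfold PPk QQk
    have e1 : j + 1 - k = (j - k) + 1 := by omega
    have e2 : j + 1 - (k + 1) = j - k := by omega
    have e3 : k + 1 - ℓ = (k - ℓ) + 1 := by omega
    rw [e1, e2, e3]
    apply Pterm_eq_Qterm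
    · intro i
      exact congrArg f (by rw [Fin.val_succ]; omega)
    · intro i
      rfl
    · exact congrArg f (by simp only [Fin.val_last, Fin.val_zero]; omega)
  have hQbot : QQk f ℓ j ℓ = 0 := by
    unfold QQk
    have : IsEmpty ↥({z : PQI (j + 1 - ℓ) (ℓ - ℓ) | pcond z}ᶜ) := by
      constructor
      rintro ⟨z, hz⟩
      exact hz ⟨⟨0, by omega⟩, fun i => absurd i.isLt (by omega)⟩
    exact tsum_empty
  have hPtop : PPk f ℓ j (j + 1) = 0 := by
    unfold PPk
    have : IsEmpty ↥{z : PQI (j + 1 - (j + 1)) (j + 1 - ℓ) | pcond z} := by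
      constructor
      rintro ⟨z, m, hm⟩
      exact absurd m.isLt (by omega)
    exact tsum_empty
  have tele : ∑ k ∈ Finset.Icc ℓ (j + 1),
      (-1 : R) ^ k * (Lser f k j * Lstar f ℓ (k - 1)) = 0 := by
    have hterm : ∀ k ∈ Finset.Icc ℓ (j + 1),
        (-1 : R) ^ k * (Lser f k j * Lstar f ℓ (k - 1)) =
          (-1 : R) ^ k * PPk f ℓ j k + (-1 : R) ^ k * QQk f ℓ j k := by
      intro k hk
      rw [Finset.mem_Icc] at hk
      rw [key k hk.1 hk.2]
      ring
    rw [Finset.sum_congr rfl hterm, Finset.sum_add_distrib]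
    have hP : ∑ k ∈ Finset.Icc ℓ (j + 1), (-1 : R) ^ k * PPk f ℓ j k
        = ∑ k ∈ Finset.Icc ℓ j, (-1 : R) ^ k * PPk f ℓ j k := by
      refine (Finset.sum_subset (fun x hx => ?_) (fun x hx hnx => ?_)).symm
      · rw [Finset.mem_Icc] at hx ⊢; omega
      · have hx1 : x = j + 1 := by
          simp only [Finset.mem_Icc] at hx hnx
          omega
        subst hx1
        rw [hPtop, mul_zero]
    have hQ : ∑ k ∈ Finset.Icc ℓ (j + 1), (-1 : R) ^ k * QQk f ℓ j k
        = ∑ k ∈ Finset.Icc ℓ j, (-1 : R) ^ (k + 1) * QQk f ℓ j (k + 1) := by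
      have hstep1 : ∑ k ∈ Finset.Icc ℓ (j + 1), (-1 : R) ^ k * QQk f ℓ j k
          = ∑ k ∈ Finset.Icc (ℓ + 1) (j + 1), (-1 : R) ^ k * QQk f ℓ j k := by
        refine (Finset.sum_subset (fun x hx => ?_) (fun x hx hnx => ?_)).symm
        · rw [Finset.mem_Icc] at hx ⊢; omega
        · have hx1 : x = ℓ := by
            rw [Finset.mem_Icc] at hx
            by_contra hc
            exact hnx (by rw [Finset.mem_Icc]; omega)
          subst hx1
          rw [hQbot, mul_zero]
      have hstep2 : Finset.Icc (ℓ + 1) (j + 1)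
          = (Finset.Icc ℓ j).map (addRightEmbedding 1) := by
        rw [Finset.map_add_right_Icc]
      rw [hstep1, hstep2, Finset.sum_map]
      exact Finset.sum_congr rfl fun x _ => by simp [addRightEmbedding_apply]
    rw [hP, hQ, ← Finset.sum_add_distrib]
    refine Finset.sum_eq_zero fun k hk => ?_
    rw [Finset.mem_Icc] at hk
    rw [← hPQ k hk.1 hk.2, pow_succ]
    ring
  -- now unpack `tele`
  have e1 : Finset.Icc ℓ (j + 1) = insert ℓ (Finset.Icc (ℓ + 1) (j + 1)) :=
    Finset.ext fun x => by
      simp only [Finset.mem_Icc, Finset.mem_insert]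
      omega
  have e2 : Finset.Icc (ℓ + 1) (j + 1) = insert (j + 1) (Finset.Icc (ℓ + 1) j) :=
    Finset.ext fun x => by
      simp only [Finset.mem_Icc, Finset.mem_insert]
      omega
  rw [e1, Finset.sum_insert (by simp only [Finset.mem_Icc]; omega),
    e2, Finset.sum_insert (by simp only [Finset.mem_Icc]; omega)] at tele
  rw [Lstar_bot f ℓ (ℓ - 1) (by omega), Lser_top f (j + 1) j (by omega)] at tele
  have e3 : j + 1 - 1 = j := by omega
  rw [e3] at tele
  have hS : ∑ k ∈ Finset.Icc (ℓ + 1) j,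
      (-1 : R) ^ k * Lser f k j * Lstar f ℓ (k - 1)
      = ∑ k ∈ Finset.Icc (ℓ + 1) j,
      (-1 : R) ^ k * (Lser f k j * Lstar f ℓ (k - 1)) :=
    Finset.sum_congr rfl fun x _ => by ring
  rw [hS]
  rw [pow_succ] at tele
  linear_combination -tele
end

section
/- For all integers 1 ≤ ℓ ≤ j ≤ n, the identity τ^{−1}(L*(ℓ,j)) = Σ_{k=ℓ}^{j+1} L*(k,j) · τ^{−1}(q_ℓ · q_{ℓ+1} ⋯ q_{k−1}) · (c·ω)^{s_ℓ + s_{ℓ+1} + ⋯ + s_{k−1}} holds in R, where for k = ℓ the product q_ℓ⋯q_{k−1} and the exponent sum are empty (the term is L*(ℓ,j)), and for k = j+1 one has L*(j+1,j) = 1. (This is the paper's Lemma stating 𝔏*(s_{j−1},…,s_ℓ)^{(−1)} = 𝔏*(s_{j−1},…,s_ℓ) + 𝔏*(s_{j−1},…,s_{ℓ+1})·Q_ℓ^{(−1)}·[(t−θ)Ω]^{s_ℓ} + ⋯ + Q_ℓ^{(−1)}⋯Q_{j−1}^{(−1)}·[(t−θ)Ω]^{s_ℓ+⋯+s_{j−1}},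 derived from Ψ^{(−1)} = ΦΨ.) -/
open scoped BigOperators

section auxsect
open Filter

variable {R : Type*} [NormedCommRing R] [IsUltrametricDist R] [CompleteSpace R]

/-- The summand family of `Lstar`, parameterized by start `a` and length `k`. -/
noncomputable def Pfam (F : ℕ → ℕ → R) (a k : ℕ) (g : {g : Fin k → ℕ // Monotone g}) : R :=
  ∏ m : Fin k, F (a + (m : ℕ)) (g.1 m)

lemma summable_Pfam (F : ℕ → ℕ → R) (a k : ℕ)
    (hF : ∀ m, m < k → Filter.Tendsto (fun i => ‖F (a + m) i‖) Filter.atTop (nhds 0)) :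
    Summable (Pfam F a k) := by
  rcases Nat.eq_zero_or_pos k with hk | hk
  · subst hk
    haveI : Subsingleton {g : Fin 0 → ℕ // Monotone g} :=
      ⟨fun a b => Subtype.ext (funext fun m => m.elim0)⟩
    exact Summable.of_finite
  obtain ⟨K, rfl⟩ : ∃ K, k = K + 1 := ⟨k - 1, by omega⟩
  apply NonarchimedeanAddGroup.summable_of_tendsto_cofinite_zero
  -- get a uniform bound C ≥ 1 on all the norms
  have hbd : ∀ m : Fin (K + 1), ∃ C : ℝ, ∀ i, ‖F (a + (m : ℕ)) i‖ ≤ C := by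
    intro m
    obtain ⟨C, hC⟩ := (hF m m.isLt).bddAbove_range
    exact ⟨C, fun i => hC ⟨i, rfl⟩⟩
  choose Cf hCf using hbd
  have hCf0 : ∀ m, 0 ≤ Cf m := fun m => le_trans (norm_nonneg _) (hCf m 0)
  set C : ℝ := 1 + ∑ m : Fin (K + 1), Cf m with hCdef
  have hC1 : (1 : ℝ) ≤ C :=
    le_add_of_nonneg_right (Finset.sum_nonneg fun m _ => hCf0 m)
  have hC0 : (0 : ℝ) < C := by linarith
  have hCb : ∀ (m : Fin (K + 1)) (i : ℕ), ‖F (a + (m : ℕ)) i‖ ≤ C := by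
    intro m i
    refine (hCf m i).trans ?_
    have := Finset.single_le_sum (f := Cf) (fun m _ => hCf0 m) (Finset.mem_univ m)
    linarith
  have hCK : (0 : ℝ) < C ^ K := pow_pos hC0 K
  rw [Metric.tendsto_nhds]
  intro ε hε
  rw [Filter.eventually_cofinite]
  obtain ⟨M, hM⟩ := Filter.eventually_atTop.1
    ((hF K (by omega)).eventually_lt_const (div_pos hε hCK))
  -- the exceptional set is contained in a finite set
  have h1 : (Set.pi Set.univ fun _ : Fin (K + 1) => Set.Iio M).Finite :=
    Set.Finite.pi fun _ => Set.finite_Iio M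
  have hfin : {g : {g : Fin (K + 1) → ℕ // Monotone g} | g.1 (Fin.last K) < M}.Finite := by
    refine (h1.preimage (Set.injOn_of_injective Subtype.val_injective)).subset ?_
    intro g hg
    simp only [Set.mem_preimage, Set.mem_pi, Set.mem_univ, Set.mem_Iio, forall_true_left]
    intro m
    exact lt_of_le_of_lt (g.2 (Fin.le_last m)) hg
  refine hfin.subset ?_
  intro g hg
  simp only [Set.mem_setOf_eq, dist_zero_right, not_lt] at hg
  by_contra hlt
  simp only [Set.mem_setOf_eq, not_lt] at hlt
  have hnorm : ‖Pfam F a (K + 1) g‖ < ε := by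
    have hle : ‖Pfam F a (K + 1) g‖ ≤ ∏ m : Fin (K + 1), ‖F (a + (m : ℕ)) (g.1 m)‖ :=
      Finset.norm_prod_le' Finset.univ Finset.univ_nonempty _
    refine lt_of_le_of_lt hle ?_
    rw [Fin.prod_univ_castSucc]
    have h2 : (∏ m : Fin K, ‖F (a + ((Fin.castSucc m : Fin (K+1)) : ℕ)) (g.1 (Fin.castSucc m))‖) ≤ C ^ K := by
      calc (∏ m : Fin K, ‖F (a + ((Fin.castSucc m : Fin (K+1)) : ℕ)) (g.1 (Fin.castSucc m))‖)
          ≤ ∏ _m : Fin K, C :=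
            Finset.prod_le_prod (fun m _ => norm_nonneg _) (fun m _ => hCb _ _)
        _ = C ^ K := by simp
    have h3 : ‖F (a + ((Fin.last K : Fin (K+1)) : ℕ)) (g.1 (Fin.last K))‖ < ε / C ^ K := by
      simpa [Fin.val_last] using hM _ hlt
    calc (∏ m : Fin K, ‖F (a + ((Fin.castSucc m : Fin (K+1)) : ℕ)) (g.1 (Fin.castSucc m))‖) *
          ‖F (a + ((Fin.last K : Fin (K+1)) : ℕ)) (g.1 (Fin.last K))‖
        ≤ C ^ K * ‖F (a + ((Fin.last K : Fin (K+1)) : ℕ)) (g.1 (Fin.last K))‖ :=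
          mul_le_mul_of_nonneg_right h2 (norm_nonneg _)
      _ < C ^ K * (ε / C ^ K) := by exact mul_lt_mul_of_pos_left h3 hCK
      _ = ε := by field_simp
  exact absurd hnorm (not_lt.2 hg)
noncomputable def TS (F : ℕ → ℕ → R) (a k : ℕ) : R := ∑' g, Pfam F a k g

def zeroHeadSet (N : ℕ) : Set {g : Fin (N + 1) → ℕ // Monotone g} := {g | g.1 0 = 0}

/-- Shift equivalence onto the functions with nonzero head. -/
def shiftEquiv (N : ℕ) : {g : Fin (N + 1) → ℕ // Monotone g} ≃ ↥(zeroHeadSet N)ᶜ where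
  toFun h :=
    ⟨⟨fun m => h.1 m + 1, fun x y hxy => Nat.add_le_add_right (h.2 hxy) 1⟩,
      fun hmem => Nat.succ_ne_zero (h.1 0) hmem⟩
  invFun x :=
    ⟨fun m => x.1.1 m - 1, fun u v huv => Nat.sub_le_sub_right (x.1.2 huv) 1⟩
  left_inv h := by ext m; simp
  right_inv x := by
    have hx : ∀ m, 1 ≤ x.1.1 m := by
      intro m
      have h0 : ¬ (x.1.1 0 = 0) := x.2
      exact le_trans (Nat.one_le_iff_ne_zero.2 h0) (x.1.2 (Fin.zero_le m))
    apply Subtype.ext; apply Subtype.ext; funext m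
    exact Nat.succ_pred_eq_of_pos (hx m)

/-- Prepend-zero equivalence onto the functions with zero head. -/
def consEquiv (N : ℕ) : {g : Fin N → ℕ // Monotone g} ≃ ↥(zeroHeadSet N) where
  toFun h :=
    ⟨⟨Fin.cases 0 h.1, by
      intro x y hxy
      induction x using Fin.cases with
      | zero => simp
      | succ x =>
        induction y using Fin.cases with
        | zero => exact absurd (Fin.le_zero_iff.mp hxy) (Fin.succ_ne_zero x)
        | succ y => simpa using h.2 (Fin.succ_le_succ_iff.mp hxy)⟩, by simp [zeroHeadSet]⟩
  invFun x := ⟨fun m => x.1.1 m.succ, fun u v huv => x.1.2 (Fin.succ_le_succ_iff.mpr huv)⟩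
  left_inv h := by ext m; simp
  right_inv x := by
    apply Subtype.ext; apply Subtype.ext; funext m
    induction m using Fin.cases with
    | zero =>
      have h0 : x.1.1 0 = 0 := x.2
      simp [h0]
    | succ m => simp

/-- The head-zero / shift decomposition of the simplex sum, after applying `τ.symm`. -/
lemma core (τ : R ≃+* R) (hτc : Continuous (⇑τ.symm)) (F : ℕ → ℕ → R) (u : ℕ → R)
    (hF0 : ∀ m, τ.symm (F m 0) = u m) (hFs : ∀ m i, τ.symm (F m (i + 1)) = F m i)
    (a N : ℕ) (h1 : Summable (Pfam F a (N + 1))) (h2 : Summable (Pfam F (a + 1) N)) :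
    τ.symm (TS F a (N + 1)) = TS F a (N + 1) + u a * τ.symm (TS F (a + 1) N) := by
  classical
  set A : Set {g : Fin (N + 1) → ℕ // Monotone g} := zeroHeadSet N with hA
  have hQ : Summable (⇑τ.symm ∘ Pfam F a (N + 1)) := h1.map τ.symm hτc
  have hmap : τ.symm (TS F a (N + 1)) = ∑' g, τ.symm (Pfam F a (N + 1) g) :=
    h1.map_tsum τ.symm hτc
  have hsplit :
      (∑' x : A, τ.symm (Pfam F a (N + 1) x)) + ∑' x : ↥Aᶜ, τ.symm (Pfam F a (N + 1) x) =
        ∑' g, τ.symm (Pfam F a (N + 1) g) :=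
    Summable.tsum_add_tsum_compl (hQ.subtype A) (hQ.subtype Aᶜ)
  have hcompl : (∑' x : ↥Aᶜ, τ.symm (Pfam F a (N + 1) x)) = TS F a (N + 1) := by
    rw [← (shiftEquiv N).tsum_eq fun x : ↥Aᶜ => τ.symm (Pfam F a (N + 1) x)]
    apply tsum_congr
    intro h
    show τ.symm (Pfam F a (N + 1) ((shiftEquiv N) h).1) = Pfam F a (N + 1) h
    unfold Pfam
    rw [map_prod]
    refine Finset.prod_congr rfl fun m _ => ?_
    show τ.symm (F (a + (m : ℕ)) (h.1 m + 1)) = F (a + (m : ℕ)) (h.1 m)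
    exact hFs _ _
  have hApart : (∑' x : A, τ.symm (Pfam F a (N + 1) x)) = u a * τ.symm (TS F (a + 1) N) := by
    rw [← (consEquiv N).tsum_eq fun x : A => τ.symm (Pfam F a (N + 1) x)]
    have hterm : ∀ h : {g : Fin N → ℕ // Monotone g},
        τ.symm (Pfam F a (N + 1) ((consEquiv N) h).1) = u a * τ.symm (Pfam F (a + 1) N h) := by
      intro h
      have hh : Pfam F a (N + 1) ((consEquiv N) h).1
          = F a 0 * ∏ m : Fin N, F (a + 1 + (m : ℕ)) (h.1 m) := by
        show (∏ m : Fin (N + 1), F (a + (m : ℕ)) (Fin.cases 0 h.1 m)) = _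
        rw [Fin.prod_univ_succ]
        simp only [Fin.cases_zero, Fin.cases_succ, Fin.val_zero, Nat.add_zero, Fin.val_succ]
        congr 1
        exact Finset.prod_congr rfl fun m _ => by
          have hmm : a + ((m : ℕ) + 1) = a + 1 + (m : ℕ) := by omega
          rw [hmm]
      rw [hh, map_mul, hF0]
      rfl
    calc (∑' h, τ.symm (Pfam F a (N + 1) ((consEquiv N) h).1))
        = ∑' h, u a * τ.symm (Pfam F (a + 1) N h) := tsum_congr hterm
      _ = u a * ∑' h, τ.symm (Pfam F (a + 1) N h) :=
          (h2.map τ.symm hτc).tsum_mul_left (u a)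
      _ = u a * τ.symm (TS F (a + 1) N) := by rw [← h2.map_tsum τ.symm hτc]; rfl
  rw [hmap, ← hsplit, hApart, hcompl, add_comm]
lemma Lstar_eq_TS (F : ℕ → ℕ → R) (ℓ j : ℕ) : Lstar F ℓ j = TS F ℓ (j + 1 - ℓ) := rfl

end auxsect

/-- Let `τ` be an isometric ring automorphism of the complete nonarchimedean normed
commutative ring `R`, let `ω, c, q_1, …, q_n ∈ R` with `τ⁻¹(ω) = c·ω`, let
`s_1, …, s_n ≥ 1`, and set `f_m(i) := τ^i(ω^{s_m}·q_m)`, assuming `‖f_m(i)‖ → 0`.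
Then for all `1 ≤ ℓ ≤ j ≤ n`:
`τ⁻¹(L*(ℓ,j)) = Σ_{k=ℓ}^{j+1} L*(k,j) · τ⁻¹(q_ℓ⋯q_{k−1}) · (c·ω)^{s_ℓ+⋯+s_{k−1}}`,
where for `k = ℓ` the product and exponent sum are empty, and `L*(j+1,j) = 1`. -/
theorem stmt3 {R : Type*} [NormedCommRing R] [IsUltrametricDist R] [CompleteSpace R]
    (τ : R ≃+* R) (hτ : ∀ x, ‖τ x‖ = ‖x‖)
    (n : ℕ) (hn : 1 ≤ n) (ω c : R) (q : ℕ → R) (s : ℕ → ℕ)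
    (hs : ∀ m, 1 ≤ m → m ≤ n → 1 ≤ s m)
    (hω : τ.symm ω = c * ω)
    (hf : ∀ m, 1 ≤ m → m ≤ n →
      Filter.Tendsto (fun i => ‖(⇑τ)^[i] (ω ^ s m * q m)‖) Filter.atTop (nhds 0))
    (ℓ j : ℕ) (hℓ : 1 ≤ ℓ) (hℓj : ℓ ≤ j) (hj : j ≤ n) :
    τ.symm (Lstar (fun m i => (⇑τ)^[i] (ω ^ s m * q m)) ℓ j) =
      ∑ k ∈ Finset.Icc ℓ (j + 1),
        Lstar (fun m i => (⇑τ)^[i] (ω ^ s m * q m)) k j *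
          τ.symm (∏ m ∈ Finset.Ico ℓ k, q m) *
          (c * ω) ^ (∑ m ∈ Finset.Ico ℓ k, s m) := by
  set F : ℕ → ℕ → R := fun m i => (⇑τ)^[i] (ω ^ s m * q m) with hFdef
  have hτsymmc : Continuous (⇑τ.symm) :=
    (AddMonoidHomClass.isometry_of_norm τ.symm (fun x => by
      rw [← hτ (τ.symm x), RingEquiv.apply_symm_apply])).continuous
  have hF0 : ∀ m, τ.symm (F m 0) = (c * ω) ^ (s m) * τ.symm (q m) := by
    intro m
    show τ.symm ((⇑τ)^[0] (ω ^ s m * q m)) = _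
    simp only [Function.iterate_zero_apply, map_mul, map_pow, hω]
  have hFs : ∀ m i, τ.symm (F m (i + 1)) = F m i := by
    intro m i
    show τ.symm ((⇑τ)^[i + 1] (ω ^ s m * q m)) = (⇑τ)^[i] (ω ^ s m * q m)
    rw [Function.iterate_succ_apply']
    exact τ.symm_apply_apply _
  have hsumm : ∀ a k, 1 ≤ a → a + k ≤ n + 1 → Summable (Pfam F a k) := by
    intro a k ha hk
    apply summable_Pfam
    intro m hm
    exact hf (a + m) (by omega) (by omega)
  have step : ∀ ℓ', 1 ≤ ℓ' → ℓ' ≤ j →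
      τ.symm (Lstar F ℓ' j) =
        Lstar F ℓ' j + (c * ω) ^ (s ℓ') * τ.symm (q ℓ') * τ.symm (Lstar F (ℓ' + 1) j) := by
    intro ℓ' h1 h2
    have e1 : j + 1 - ℓ' = (j - ℓ') + 1 := by omega
    have e2 : j + 1 - (ℓ' + 1) = j - ℓ' := by omega
    rw [Lstar_eq_TS, Lstar_eq_TS, e1, e2, mul_assoc]
    rw [← mul_assoc]
    exact core τ hτsymmc F (fun m => (c * ω) ^ (s m) * τ.symm (q m)) hF0 hFs ℓ' (j - ℓ')
      (hsumm ℓ' (j - ℓ' + 1) h1 (by omega)) (hsumm (ℓ' + 1) (j - ℓ') (by omega) (by omega))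
  suffices H : ∀ d ℓ', 1 ≤ ℓ' → ℓ' + d = j + 1 →
      τ.symm (Lstar F ℓ' j) =
        ∑ k ∈ Finset.Icc ℓ' (j + 1), Lstar F k j * τ.symm (∏ m ∈ Finset.Ico ℓ' k, q m) *
          (c * ω) ^ (∑ m ∈ Finset.Ico ℓ' k, s m) by
    exact H (j + 1 - ℓ) ℓ hℓ (by omega)
  intro d
  induction d with
  | zero =>
    intro ℓ' h1 h2
    obtain rfl : ℓ' = j + 1 := by omega
    have h0 : Lstar F (j + 1) j = 1 := by
      rw [Lstar_eq_TS, show j + 1 - (j + 1) = 0 from by omega]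
      unfold TS Pfam
      haveI : Subsingleton {g : Fin 0 → ℕ // Monotone g} :=
        ⟨fun a b => Subtype.ext (funext fun m => m.elim0)⟩
      rw [tsum_eq_single (⟨fun m => m.elim0, fun x => x.elim0⟩ : {g : Fin 0 → ℕ // Monotone g})
        (fun b' hb' => absurd (Subsingleton.elim b' _) hb')]
      simp
    rw [Finset.Icc_self, Finset.sum_singleton, Finset.Ico_self, h0]
    simp
  | succ d ih =>
    intro ℓ' h1 h2
    have hle : ℓ' ≤ j := by omega
    rw [step ℓ' h1 hle, ih (ℓ' + 1) (by omega) (by omega)]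
    have hicc : Finset.Icc ℓ' (j + 1) = insert ℓ' (Finset.Icc (ℓ' + 1) (j + 1)) := by
      ext x; simp only [Finset.mem_Icc, Finset.mem_insert]; omega
    rw [hicc, Finset.sum_insert (by simp only [Finset.mem_Icc]; omega), Finset.Ico_self]
    simp only [Finset.prod_empty, Finset.sum_empty, map_one, mul_one, pow_zero]
    congr 1
    rw [Finset.mul_sum]
    refine Finset.sum_congr rfl fun k hk => ?_
    have hk' : ℓ' < k := by
      simp only [Finset.mem_Icc] at hk; omega
    rw [Finset.prod_eq_prod_Ico_succ_bot hk', Finset.sum_eq_sum_Ico_succ_bot hk', map_mul, pow_add]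
    ring
end

section
/- For every integer n with q+1 ≤ n ≤ q², setting k := ⌊(n−1)/q⌋, the Anderson–Thakur polynomial satisfies H_n(t) = Σ_{j=0}^{k} C(n−jq+j−1, j) · (t^q − t)^{k−j} · (t^q − θ^q)^j, an identity in 𝔽_q[θ,t], where C(n−jq+j−1, j) denotes the binomial coefficient reduced modulo the characteristic p. -/
open scoped BigOperators

/-- The rational function field `F(θ,t)`, realized as the fraction field of
`F[θ][t] =` `Polynomial (Polynomial F)` (inner variable `θ`, outer variable `t`). -/
noncomputable abbrev Kf (F : Type*) [Field F] : Type _ :=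
  FractionRing (Polynomial (Polynomial F))

/-- The element `θ` of `F(θ,t)`. -/
noncomputable def θK (F : Type*) [Field F] : Kf F :=
  algebraMap (Polynomial (Polynomial F)) (Kf F) (Polynomial.C Polynomial.X)

/-- The element `t` of `F(θ,t)`. -/
noncomputable def tK (F : Type*) [Field F] : Kf F :=
  algebraMap (Polynomial (Polynomial F)) (Kf F) Polynomial.X

/-- `Dd F q u k = D_k = ∏_{ℓ=1}^{k} [ℓ]^{q^{k−ℓ}}` where `[ℓ] = u^{q^ℓ} − u`
(in the paper `u = θ`; swapping `θ` and `t` corresponds to `u = t`). `D_0 = 1`. -/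
noncomputable def Dd (F : Type*) [Field F] (q : ℕ) (u : Kf F) (k : ℕ) : Kf F :=
  ∏ l ∈ Finset.Icc 1 k, (u ^ q ^ l - u) ^ q ^ (k - l)

/-- `Gam F q u n = Γ_n = ∏_{j≥0} D_j^{n_j}` where `n−1 = Σ_j n_j q^j` is the base-`q`
expansion (so `n_j = (n−1)/q^j mod q`); all digits with `j ≥ n` vanish since `q ≥ 2`. -/
noncomputable def Gam (F : Type*) [Field F] (q : ℕ) (u : Kf F) (n : ℕ) : Kf F :=
  ∏ j ∈ Finset.range n, Dd F q u j ^ ((n - 1) / q ^ j % q)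

/-- `gammaAT F q u v j = γ_j = ∏_{ℓ=1}^{j} (u^{q^j} − v^{q^ℓ})`
(in the paper `u = θ`, `v = t`). `γ_0 = 1`. -/
noncomputable def gammaAT (F : Type*) [Field F] (q : ℕ) (u v : Kf F) (j : ℕ) : Kf F :=
  ∏ l ∈ Finset.Icc 1 j, (u ^ q ^ j - v ^ q ^ l)

/-- The power series `Σ_{j≥0} (γ_j/D_j) x^{q^j}`: its coefficient at `m` is
`γ_j/D_j` if `m = q^j` (for `q ≥ 2` such `j` is unique, namely `j = Nat.log q m`),
and `0` otherwise. -/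
noncomputable def SserAT (F : Type*) [Field F] (q : ℕ) (u v : Kf F) : PowerSeries (Kf F) :=
  PowerSeries.mk fun m =>
    if q ^ Nat.log q m = m then gammaAT F q u v (Nat.log q m) / Dd F q u (Nat.log q m)
    else 0

/-- `alphaAT F q u v n = Γ_n ·` (coefficient of `x^n` in `x·(1 − Σ_{j≥0}(γ_j/D_j)x^{q^j})⁻¹`).
For `u = θ, v = t` this is the Anderson–Thakur polynomial `α_n`, and for `u = t, v = θ`
it is its image `H_n` under the `𝔽_q`-algebra automorphism interchanging `θ` and `t`. -/
noncomputable def alphaAT (F : Type*) [Field F] (q : ℕ) (u v : Kf F) (n : ℕ) : Kf F :=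
  Gam F q u n *
    PowerSeries.coeff n (PowerSeries.X * (1 - SserAT F q u v)⁻¹)

section Aux
open Finset

lemma csum_rec {R : Type*} [CommRing R] (q m : ℕ) (hq : 2 ≤ q) (hm : 1 ≤ m) (b : R) :
    (∑ j ∈ range (m / q + 1), (Nat.choose (m - j * q + j) j : R) * b ^ j)
    = (∑ j ∈ range ((m - 1) / q + 1), (Nat.choose (m - 1 - j * q + j) j : R) * b ^ j)
    + (if q ≤ m then b * ∑ j ∈ range ((m - q) / q + 1),
        (Nat.choose (m - q - j * q + j) j : R) * b ^ j else 0) := by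
  have hq0 : 0 < q := by omega
  have hmul : ∀ j, j ≤ m / q → j * q ≤ m := fun j hj =>
    le_trans (Nat.mul_le_mul_right _ hj) (Nat.div_mul_le_self m q)
  have hPascal : ∀ j ∈ range (m / q + 1),
      ((Nat.choose (m - j * q + j) j : R) * b ^ j)
      = (Nat.choose (m - j * q + j - 1) j : R) * b ^ j
        + (if j = 0 then 0 else (Nat.choose (m - j * q + j - 1) (j - 1) : R) * b ^ j) := by
    intro j hj
    rcases Nat.eq_zero_or_pos j with rfl | hjpos
    · simp
    · obtain ⟨i, rfl⟩ : ∃ i, j = i + 1 := ⟨j - 1, by omega⟩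
      have hjq : (i + 1) * q ≤ m := hmul _ (Nat.lt_succ_iff.mp (mem_range.mp hj))
      have e1 : m - (i+1) * q + (i+1) = (m - (i+1) * q + i) + 1 := by omega
      rw [e1]
      simp only [Nat.add_sub_cancel]
      rw [Nat.choose_succ_succ, if_neg (by omega)]
      push_cast
      ring
  rw [Finset.sum_congr rfl hPascal, Finset.sum_add_distrib]
  congr 1
  · -- first sums
    have hk' : (m - 1) / q ≤ m / q := Nat.div_le_div_right (by omega)
    have hk'' : m / q ≤ (m - 1) / q + 1 := by
      calc m / q ≤ ((m - 1) + q) / q := Nat.div_le_div_right (by omega)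
        _ = (m - 1) / q + 1 := Nat.add_div_right _ hq0
    have hterm : ∀ j, j ≤ (m - 1) / q →
        (Nat.choose (m - j * q + j - 1) j : R) * b ^ j
        = (Nat.choose (m - 1 - j * q + j) j : R) * b ^ j := by
      intro j hj
      have hjm : j * q ≤ m - 1 :=
        le_trans (Nat.mul_le_mul_right _ hj) (Nat.div_mul_le_self _ q)
      have : m - j * q + j - 1 = m - 1 - j * q + j := by omega
      rw [this]
    rcases eq_or_lt_of_le hk' with heq | hlt
    · rw [heq]
      exact Finset.sum_congr rfl fun j hj =>
        hterm j (heq ▸ Nat.lt_succ_iff.mp (mem_range.mp hj))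
    · have hkk : m / q = (m - 1) / q + 1 := by omega
      rw [hkk, Finset.sum_range_succ]
      have h1 : ((m-1)/q + 1) * q ≤ m := by rw [← hkk]; exact hmul _ le_rfl
      have h2 : m - 1 < ((m-1)/q + 1) * q :=
        (Nat.div_lt_iff_lt_mul hq0).mp (Nat.lt_succ_self _)
      have e4 : m - ((m-1)/q + 1) * q + ((m-1)/q + 1) - 1 = (m-1)/q := by
        generalize hP : ((m-1)/q + 1) * q = P at h1 h2
        generalize (m-1)/q = k at *
        omega
      rw [e4, Nat.choose_eq_zero_of_lt (Nat.lt_succ_self _)]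
      push_cast
      rw [zero_mul, add_zero]
      exact Finset.sum_congr rfl fun j hj =>
        hterm j (Nat.lt_succ_iff.mp (mem_range.mp hj))
  · -- second sums
    rw [Finset.sum_range_succ']
    simp only [Nat.add_sub_cancel, Nat.succ_ne_zero, ite_false, ite_true, add_zero,
      if_neg (Nat.succ_ne_zero _), reduceIte]
    by_cases hqm : q ≤ m
    · rw [if_pos hqm]
      have hdiv : m / q = (m - q) / q + 1 := Nat.div_eq_sub_div hq0 hqm
      rw [hdiv, Finset.mul_sum]
      refine Finset.sum_congr rfl fun i hi => ?_
      have hi1 : i + 1 ≤ m / q := by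
        rw [hdiv]; exact Nat.succ_le_succ (Nat.lt_succ_iff.mp (mem_range.mp hi))
      have hiq : (i + 1) * q ≤ m := hmul _ hi1
      have e3 : m - (i + 1) * q + (i + 1) - 1 = m - q - i * q + i := by
        have : (i + 1) * q = i * q + q := by ring
        omega
      rw [e3, pow_succ]
      ring
    · rw [if_neg hqm]
      have : m / q = 0 := Nat.div_eq_of_lt (by omega)
      rw [this]
      simp

end Aux

set_option maxHeartbeats 2000000 in
/-- For every integer `n` with `q+1 ≤ n ≤ q²`, setting `k := ⌊(n−1)/q⌋`, the
Anderson–Thakur polynomial satisfies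
`H_n(t) = Σ_{j=0}^{k} C(n−jq+j−1, j) · (t^q − t)^{k−j} · (t^q − θ^q)^j`
in `𝔽_q(θ,t)`, where the binomial coefficient is reduced modulo the characteristic. -/
theorem stmt7 (F : Type*) [Field F] [Fintype F] (n : ℕ)
    (h1 : Fintype.card F + 1 ≤ n) (h2 : n ≤ Fintype.card F ^ 2) :
    alphaAT F (Fintype.card F) (tK F) (θK F) n =
      ∑ j ∈ Finset.range ((n - 1) / Fintype.card F + 1),
        (Nat.choose (n - j * Fintype.card F + j - 1) j : Kf F) *
          (tK F ^ Fintype.card F - tK F) ^ ((n - 1) / Fintype.card F - j) *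
          (tK F ^ Fintype.card F - θK F ^ Fintype.card F) ^ j := by

  classical
  set q := Fintype.card F with hqdef
  have hq : 2 ≤ q := Fintype.one_lt_card
  have hq0 : 0 < q := by omega
  obtain ⟨m0, rfl⟩ : ∃ m, n = m + 1 := ⟨n - 1, by omega⟩
  have hm0 : q ≤ m0 := by omega
  have hm0q : m0 < q ^ 2 := by omega
  simp only [Nat.add_sub_cancel]
  set D1 : Kf F := tK F ^ q - tK F with hD1def
  set Nm : Kf F := tK F ^ q - θK F ^ q with hNmdef
  have hD1 : D1 ≠ 0 := by
    have hpoly : (Polynomial.X ^ q - Polynomial.X : Polynomial (Polynomial F)) ≠ 0 := by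
      intro h
      have h2 := congrArg (fun p => Polynomial.coeff p q) h
      simp only [Polynomial.coeff_sub, Polynomial.coeff_X_pow, Polynomial.coeff_X,
        Polynomial.coeff_zero] at h2
      rw [if_true, if_neg (by omega : ¬ (1 : ℕ) = q), sub_zero] at h2
      exact one_ne_zero h2
    have hmap : D1 = algebraMap (Polynomial (Polynomial F)) (Kf F)
        (Polynomial.X ^ q - Polynomial.X) := by
      simp [hD1def, tK, map_sub, map_pow]
    rw [hmap]
    exact (map_ne_zero_iff _ (IsFractionRing.injective (Polynomial (Polynomial F)) (Kf F))).mpr hpoly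
  set S := SserAT F q (tK F) (θK F) with hS
  have hS1 : PowerSeries.coeff 1 S = 1 := by
    simp [hS, SserAT, Nat.log_one_right, gammaAT, Dd,
      Finset.Icc_eq_empty (by norm_num : ¬ (1:ℕ) ≤ 0)]
  have hSq : PowerSeries.coeff q S = Nm / D1 := by
    have hlog : Nat.log q q = 1 := by simpa using Nat.log_pow hq 1
    simp [hS, SserAT, hlog, gammaAT, Dd, Finset.Icc_self, pow_one, hD1def, hNmdef]
  have hSother : ∀ i, i < q ^ 2 → i ≠ 1 → i ≠ q → PowerSeries.coeff i S = 0 := by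
    intro i hi hi1 hiq
    rw [hS, SserAT, PowerSeries.coeff_mk, if_neg]
    intro h
    rcases Nat.lt_or_ge (Nat.log q i) 2 with hl | hl
    · interval_cases h' : Nat.log q i <;> simp_all
    · have : q ^ 2 ≤ q ^ Nat.log q i := Nat.pow_le_pow_right (by omega) hl
      omega
  have hS0 : PowerSeries.coeff 0 S = 0 := hSother 0 (by positivity) (by omega) (by omega)
  set f := (1 - S)⁻¹ with hf
  have hc : PowerSeries.constantCoeff (1 - S) ≠ 0 := by
    rw [map_sub, ← PowerSeries.coeff_zero_eq_constantCoeff, hS0]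
    simp
  have hfe : f = 1 + S * f := by
    have h := PowerSeries.mul_inv_cancel (1 - S) hc
    rw [hf]
    linear_combination h
  have hrec : ∀ m, 1 ≤ m → m < q ^ 2 →
      PowerSeries.coeff m f
        = PowerSeries.coeff (m - 1) f
          + (if q ≤ m then (Nm / D1) * PowerSeries.coeff (m - q) f else 0) := by
    intro m hm1 hm2
    conv_lhs => rw [hfe]
    rw [map_add, PowerSeries.coeff_one, if_neg (by omega), zero_add, PowerSeries.coeff_mul,
      Finset.Nat.sum_antidiagonal_eq_sum_range_succ_mk]
    by_cases hqm : q ≤ m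
    · rw [if_pos hqm]
      have hsub : ({1, q} : Finset ℕ) ⊆ Finset.range (m + 1) := by
        intro x hx
        simp only [Finset.mem_insert, Finset.mem_singleton] at hx
        rcases hx with rfl | rfl <;> simp [Finset.mem_range] <;> omega
      rw [← Finset.sum_subset hsub (fun x hx hnx => ?_)]
      · rw [Finset.sum_pair (by omega : (1:ℕ) ≠ q), hS1, hSq]
        ring
      · simp only [Finset.mem_insert, Finset.mem_singleton, not_or] at hnx
        rw [hSother x (by have := Finset.mem_range.mp hx; omega) hnx.1 hnx.2, zero_mul]
    · rw [if_neg hqm, add_zero]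
      have hsub : ({1} : Finset ℕ) ⊆ Finset.range (m + 1) := by
        intro x hx
        simp only [Finset.mem_singleton] at hx
        subst hx; simp [Finset.mem_range]; omega
      rw [← Finset.sum_subset hsub (fun x hx hnx => ?_)]
      · rw [Finset.sum_singleton, hS1, one_mul]
      · simp only [Finset.mem_singleton] at hnx
        have hxm := Finset.mem_range.mp hx
        rw [hSother x (by omega) hnx (by omega), zero_mul]
  have hcf : ∀ m, m < q ^ 2 → PowerSeries.coeff m f
      = ∑ j ∈ Finset.range (m / q + 1),
          (Nat.choose (m - j * q + j) j : Kf F) * (Nm / D1) ^ j := by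
    intro m
    induction m using Nat.strong_induction_on with
    | _ m ih =>
      intro hm
      rcases Nat.eq_zero_or_pos m with rfl | hm1
      · have h0 : PowerSeries.coeff 0 f = 1 := by
          have h := congrArg (PowerSeries.coeff 0) hfe
          rwa [map_add, PowerSeries.coeff_one, if_pos rfl, PowerSeries.coeff_mul,
            Finset.Nat.sum_antidiagonal_eq_sum_range_succ_mk, Finset.sum_range_one,
            hS0, zero_mul, add_zero] at h
        rw [h0]
        simp
      · rw [hrec m hm1 hm, ih (m - 1) (by omega) (by omega),
          csum_rec q m hq hm1 (Nm / D1)]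
        congr 1
        by_cases hqm : q ≤ m
        · rw [if_pos hqm, if_pos hqm, ih (m - q) (by omega) (by omega)]
        · rw [if_neg hqm, if_neg hqm]
  have hGam : Gam F q (tK F) (m0 + 1) = D1 ^ (m0 / q) := by
    rw [Gam]
    simp only [Nat.add_sub_cancel]
    rw [Finset.prod_eq_single_of_mem 1 (Finset.mem_range.mpr (by omega)) (fun j hj hj1 => ?_)]
    · have hk : m0 / q % q = m0 / q :=
        Nat.mod_eq_of_lt ((Nat.div_lt_iff_lt_mul hq0).mpr (by nlinarith [sq_nonneg q]))
      simp [Dd, Finset.Icc_self, pow_one, hk, hD1def]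
    · rcases Nat.eq_zero_or_pos j with rfl | hjp
      · simp [Dd]
      · have hj2 : 2 ≤ j := by omega
        have hz : m0 / q ^ j = 0 :=
          Nat.div_eq_of_lt (lt_of_lt_of_le hm0q (Nat.pow_le_pow_right (by omega) hj2))
        simp [hz]
  calc alphaAT F q (tK F) (θK F) (m0 + 1)
      = D1 ^ (m0 / q) * PowerSeries.coeff m0 f := by
        simp only [alphaAT, ← hS, ← hf, hGam, PowerSeries.coeff_succ_X_mul]
    _ = ∑ j ∈ Finset.range (m0 / q + 1),
          (Nat.choose (m0 + 1 - j * q + j - 1) j : Kf F) * D1 ^ (m0 / q - j) * Nm ^ j := by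
        rw [hcf m0 hm0q, Finset.mul_sum]
        refine Finset.sum_congr rfl fun j hj => ?_
        have hjk : j ≤ m0 / q := Nat.lt_succ_iff.mp (Finset.mem_range.mp hj)
        have hjq : j * q ≤ m0 :=
          le_trans (Nat.mul_le_mul_right _ hjk) (Nat.div_mul_le_self m0 q)
        have harg : m0 + 1 - j * q + j - 1 = m0 - j * q + j := by omega
        rw [harg, div_pow, pow_sub₀ D1 hD1 hjk]
        field_simp
end
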